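/- arXiv:math/9911268 — 5 statements merged into one kernel-verified Lean document; each statement's English description precedes it below -/
import Mathlib

section
/- Every connected brace on at least five vertices is 3-connected. -/
open SimpleGraph

universe u v

variable {V : Type u} {W : Type v}

/-- `(A, B)` is a bipartition of the simple graph `G`. -/
def IsBipartition (G : SimpleGraph V) (A B : Set V) : Prop :=
  Disjoint A B ∧ A ∪ B = Set.univ ∧
    ∀ ⦃u v⦄, G.Adj u v → ((u ∈ A ∧ v ∈ B) ∨ (u ∈ B ∧ v ∈ A))

/-- `G` is `k`-extendable: every matching with at most `k` edges extends
to a perfect matching. -/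
def KExtendable (G : SimpleGraph V) (k : ℕ) : Prop :=
  ∀ M : G.Subgraph, M.IsMatching → M.edgeSet.ncard ≤ k →
    ∃ P : G.Subgraph, M ≤ P ∧ P.IsPerfectMatching

/-- A brace is a `2`-extendable bipartite graph. -/
def IsBrace (G : SimpleGraph V) : Prop :=
  (∃ A B, IsBipartition G A B) ∧ KExtendable G 2

/-- `G` has a matching whose vertex set is exactly `S`
(i.e. the subgraph of `G` induced on `S` has a perfect matching). -/
def HasPMOn (G : SimpleGraph V) (S : Set V) : Prop :=
  ∃ M : G.Subgraph, M.IsMatching ∧ M.verts = S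

/-- An orientation of a simple graph: each edge gets exactly one direction. -/
structure GraphOrientation (G : SimpleGraph V) where
  dir : V → V → Prop
  asymm : ∀ u v, dir u v → ¬ dir v u
  adj_iff : ∀ u v, G.Adj u v ↔ (dir u v ∨ dir v u)

open scoped Classical in
/-- The number of edges of the walk `w` traversed in agreement with the
orientation `o`. -/
noncomputable def forwardCount {G : SimpleGraph V} (o : GraphOrientation G) {u v : V}
    (w : G.Walk u v) : ℕ :=
  w.darts.countP fun d => decide (o.dir d.fst d.snd)

/-- `o` is a Pfaffian orientation of `G`: every central even circuit is oddly
oriented.  (For an even circuit, being oddly oriented with respect to one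
traversal direction is equivalent to being oddly oriented with respect to the
other.) -/
def IsPfaffian (G : SimpleGraph V) (o : GraphOrientation G) : Prop :=
  ∀ (v : V) (c : G.Walk v v), c.IsCycle → Even c.length →
    HasPMOn G {x | x ∉ c.support} → Odd (forwardCount o c)

/-- The neighborhood of a vertex set: vertices outside `X` adjacent to `X`. -/
def nbdSet (G : SimpleGraph V) (X : Set V) : Set V :=
  {v | v ∉ X ∧ ∃ x ∈ X, G.Adj x v}

/-- Restriction of `G` to the vertex set `T`, kept on the same vertex type. -/
def restrictG (G : SimpleGraph V) (T : Set V) : SimpleGraph V where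
  Adj x y := G.Adj x y ∧ x ∈ T ∧ y ∈ T
  symm := ⟨fun x y ⟨h, hx, hy⟩ => ⟨h.symm, hy, hx⟩⟩
  loopless := ⟨fun x ⟨h, _, _⟩ => G.loopless.irrefl x h⟩

/-- Every edge of `G` is contained in a matching with vertex set exactly `S`.
(When the edges of `G` lie within `S`, this says that the graph on `S` is
1-extendable.) -/
def OneExtendableOn (G : SimpleGraph V) (S : Set V) : Prop :=
  ∀ ⦃x y⦄, G.Adj x y → ∃ M : G.Subgraph, M.IsMatching ∧ M.verts = S ∧ M.Adj x y

/-- `G` is 1-extendable: every edge lies in a perfect matching. -/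
def OneExtendable (G : SimpleGraph V) : Prop :=
  OneExtendableOn G Set.univ

/-- `G` is `k`-connected: more than `k` vertices, and deleting fewer than
`k` vertices leaves a connected graph. -/
def KConnected (G : SimpleGraph V) [Fintype V] (k : ℕ) : Prop :=
  k < Fintype.card V ∧ ∀ S : Set V, S.ncard < k → (G.induce (Sᶜ : Set V)).Connected

/-- A walk is `M`-alternating if its edges alternately belong and do not
belong to `M`. -/
def IsAltWalk {G : SimpleGraph V} (M : G.Subgraph) {u v : V} (w : G.Walk u v) : Prop :=
  (∀ (i : ℕ) (h : i < w.edges.length), (w.edges.get ⟨i, h⟩ ∈ M.edgeSet ↔ Even i)) ∨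
  (∀ (i : ℕ) (h : i < w.edges.length), (w.edges.get ⟨i, h⟩ ∈ M.edgeSet ↔ Odd i))

/-- A path is `M`-alternating if every internal vertex (vertex of degree two
in the path) is incident with an edge of `M` lying on the path. -/
def IsMAltPath {G : SimpleGraph V} (M : G.Subgraph) {a b : V} (p : G.Walk a b) : Prop :=
  p.IsPath ∧ ∀ x ∈ p.support, x ≠ a → x ≠ b → ∃ y, M.Adj x y ∧ s(x, y) ∈ p.edges

/-- An `H`-path: a path with at least one edge, both ends in `H`, and
otherwise disjoint from `H`. -/
def IsHPath {G : SimpleGraph V} (H : G.Subgraph) {a b : V} (p : G.Walk a b) : Prop :=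
  0 < p.length ∧ a ∈ H.verts ∧ b ∈ H.verts ∧
  (∀ x ∈ p.support, x ≠ a → x ≠ b → x ∉ H.verts) ∧
  ∀ e ∈ p.edges, e ∉ H.edgeSet

/-- Neighborhood of a vertex set inside a subgraph `H`. -/
def nbdSetSub {G : SimpleGraph V} (H : G.Subgraph) (X : Set V) : Set V :=
  {v | v ∉ X ∧ ∃ x ∈ X, H.Adj x v}

/-- `M` is a perfect matching of the subgraph `H`. -/
def SubgraphPM {G₀ : SimpleGraph V} (H M : G₀.Subgraph) : Prop :=
  M ≤ H ∧ M.IsMatching ∧ M.verts = H.verts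

/-- `G` is a 4-sum of the subgraphs `G₁, G₂` of `G₀` along the central
circuit `C` with vertices `a, b, c, d` (in order):
`G₁ ∪ G₂ = G₀`, `G₁ ∩ G₂ = C`, each `Gᵢ` has a vertex not in the other, and
`G` is obtained from `G₀` by deleting some (possibly no) edges of `C`. -/
def IsFourSum (G G₀ : SimpleGraph V) (G₁ G₂ : G₀.Subgraph) (a b c d : V) : Prop :=
  ([a, b, c, d] : List V).Nodup ∧
  G₀.Adj a b ∧ G₀.Adj b c ∧ G₀.Adj c d ∧ G₀.Adj d a ∧
  HasPMOn G₀ (({a, b, c, d} : Set V)ᶜ) ∧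
  G₁ ⊔ G₂ = (⊤ : G₀.Subgraph) ∧
  (G₁ ⊓ G₂).verts = ({a, b, c, d} : Set V) ∧
  (∀ x y, (G₁ ⊓ G₂).Adj x y ↔
      s(x, y) ∈ ({s(a, b), s(b, c), s(c, d), s(d, a)} : Set (Sym2 V))) ∧
  (G₁.verts \ G₂.verts).Nonempty ∧ (G₂.verts \ G₁.verts).Nonempty ∧
  (∀ x y, G.Adj x y → G₀.Adj x y) ∧
  (∀ x y, G₀.Adj x y →
      G.Adj x y ∨ s(x, y) ∈ ({s(a, b), s(b, c), s(c, d), s(d, a)} : Set (Sym2 V)))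

/-- `G` contains `H`: some even subdivision of `H` (each edge replaced by an
internally disjoint path with an odd number of edges) is isomorphic to a
central subgraph of `G`. -/
def Contains (G : SimpleGraph V) (H : SimpleGraph W) : Prop :=
  ∃ (f : W → V) (p : ∀ u v : W, H.Adj u v → G.Walk (f u) (f v)),
    Function.Injective f ∧
    (∀ u v (h : H.Adj u v), (p u v h).IsPath ∧ Odd (p u v h).length) ∧
    (∀ u v (h : H.Adj u v), p v u h.symm = (p u v h).reverse) ∧
    (∀ u v (h : H.Adj u v) (w : W), f w ∈ (p u v h).support → w = u ∨ w = v) ∧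
    (∀ u v u' v' (h : H.Adj u v) (h' : H.Adj u' v'), s(u, v) ≠ s(u', v') →
      ∀ x, x ∈ (p u v h).support → x ∈ (p u' v' h').support →
        (x = f u ∨ x = f v) ∧ (x = f u' ∨ x = f v')) ∧
    HasPMOn G ((Set.range f ∪ {x | ∃ u v, ∃ h : H.Adj u v, x ∈ (p u v h).support})ᶜ)

/-- `K'` is obtained from `K` by a bicontraction: contracting both edges at a
vertex `u` of degree two (with distinct neighbors `a` and `b`) and deleting
parallel edges. -/
def BicontractAt (K K' : (⊤ : SimpleGraph V).Subgraph) : Prop :=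
  ∃ u a b : V, a ≠ b ∧ K.Adj u a ∧ K.Adj u b ∧
    (∀ x, K.Adj u x → x = a ∨ x = b) ∧
    K'.verts = K.verts \ {u, a} ∧
    ∀ x y, K'.Adj x y ↔ (x ∈ K.verts \ {u, a} ∧ y ∈ K.verts \ {u, a} ∧ x ≠ y ∧
      ∃ x' y', K.Adj x' y' ∧ (x' = x ∨ (x = b ∧ (x' = a ∨ x' = u))) ∧
        (y' = y ∨ (y = b ∧ (y' = a ∨ y' = u))))

/-- `G` weakly contains `H`: `G` has a central subgraph `K` from which a graph
isomorphic to `H` can be obtained by a sequence of bicontractions. -/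
def WeaklyContains (G : SimpleGraph V) (H : SimpleGraph W) : Prop :=
  ∃ K : (⊤ : SimpleGraph V).Subgraph,
    (∀ ⦃x y⦄, K.Adj x y → G.Adj x y) ∧
    HasPMOn G (K.vertsᶜ) ∧
    ∃ K' : (⊤ : SimpleGraph V).Subgraph,
      Relation.ReflTransGen BicontractAt K K' ∧ Nonempty (K'.coe ≃g H)

/-- The Heawood graph (LCF notation `[5, -5]⁷`): a 14-cycle together with the
chords `{i, i+5}` for even `i`. -/
def heawood : SimpleGraph (Fin 14) :=
  SimpleGraph.fromRel (fun i j => j = i + 1 ∨ (Even (i : ℕ) ∧ j = i + 5))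

/-- The digraph `D(G, M)` on the color class `A`, obtained from `G` by
directing every edge from `A` to `B` and contracting every edge of `M`. -/
def DGM (G : SimpleGraph V) (A : Set V) (M : G.Subgraph) : A → A → Prop :=
  fun a a' => ∃ b, M.Adj (↑a' : V) b ∧ G.Adj (↑a : V) b

/-- A digraph is strongly `k`-connected if deleting fewer than `k` vertices
leaves it strongly connected. -/
def StronglyKConnected {α : Type*} (D : α → α → Prop) (k : ℕ) : Prop :=
  ∀ S : Set α, S.ncard < k → ∀ u v : α, u ∉ S → v ∉ S →
    Relation.ReflTransGen (fun x y => D x y ∧ x ∉ S ∧ y ∉ S) u v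

/-- The edge `u₁u₂` of the graph with vertex set `S` obtained from `G₁` is
reducing: deleting both ends destroys 1-extendability. -/
def ReducingIn (G₁ : SimpleGraph V) (S : Set V) (u₁ u₂ : V) : Prop :=
  G₁.Adj u₁ u₂ ∧
    ¬ OneExtendableOn (restrictG G₁ (({u₁, u₂} : Set V)ᶜ)) (S \ {u₁, u₂})

/-- `G` (bipartite with bipartition `(A, B)`) is a 2-sum of `G₁` (with vertex
set `V₁`) and `G₂` (with vertex set `V₂`) along the edge `u₁u₂`. -/
def IsTwoSum (G : SimpleGraph V) (A B : Set V) (u₁ u₂ : V)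
    (G₁ G₂ : SimpleGraph V) (V₁ V₂ : Set V) : Prop :=
  u₁ ∈ A ∧ u₂ ∈ B ∧ G.Adj u₁ u₂ ∧
  ∃ X : Set V, X.Nonempty ∧ X ⊆ A \ {u₁} ∧ X ≠ A \ {u₁} ∧
    (nbdSet G X \ {u₂}).ncard = X.ncard ∧
    V₂ = ((X ∪ (nbdSet G X \ {u₂}))ᶜ : Set V) ∧
    V₁ = X ∪ (nbdSet G X \ {u₂}) ∪ {u₁, u₂} ∧
    (∀ x y, G₁.Adj x y ↔ ((G.Adj x y ∧ x ∈ V₁ ∧ y ∈ V₁) ∨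
      (x = u₁ ∧ y ∈ {w | w ∈ nbdSet G X \ {u₂} ∧ ¬ G.Adj u₁ w ∧ ∃ z, z ∉ V₁ ∧ G.Adj w z}) ∨
      (y = u₁ ∧ x ∈ {w | w ∈ nbdSet G X \ {u₂} ∧ ¬ G.Adj u₁ w ∧ ∃ z, z ∉ V₁ ∧ G.Adj w z}))) ∧
    (∀ x y, G₂.Adj x y ↔ ((G.Adj x y ∧ x ∈ V₂ ∧ y ∈ V₂) ∨
      (x = u₂ ∧ y ∈ {w | w ∈ (A \ X) \ {u₁} ∧ ¬ G.Adj u₂ w ∧ ∃ z, z ∉ V₂ ∧ G.Adj w z}) ∨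
      (y = u₂ ∧ x ∈ {w | w ∈ (A \ X) \ {u₁} ∧ ¬ G.Adj u₂ w ∧ ∃ z, z ∉ V₂ ∧ G.Adj w z})))

/-- A trisector: a set of four vertices whose deletion leaves at least three
connected components. -/
def IsTrisector (G : SimpleGraph V) (X : Set V) : Prop :=
  X.ncard = 4 ∧ 3 ≤ Nat.card (G.induce (Xᶜ : Set V)).ConnectedComponent
section BraceAux

variable {G : SimpleGraph V}

private lemma matching_eq_of_adj {M : G.Subgraph} (hm : M.IsMatching) {u x y : V}
    (h1 : M.Adj u x) (h2 : M.Adj u y) : x = y := by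
  obtain ⟨p, _, hu⟩ := hm (M.edge_vert h1)
  rw [hu x h1, hu y h2]

private lemma even_ncard_of_closed [Fintype V] {M : G.Subgraph} (hM : M.IsPerfectMatching)
    {C : Set V} (h : ∀ x ∈ C, ∀ y, M.Adj x y → y ∈ C) : Even C.ncard := by
  classical
  have hmatch : (M.induce C).IsMatching := by
    intro v hv
    obtain ⟨p, hp, hu⟩ := hM.1 (hM.2 v)
    exact ⟨p, ⟨hv, h v hv p hp, hp⟩, fun y hy => hu y hy.2.2⟩
  haveI : Fintype ((M.induce C).verts) := Set.Finite.fintype (Set.toFinite _)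
  have he := hmatch.even_card
  rw [Set.toFinset_card, ← Nat.card_eq_fintype_card] at he
  rw [← Nat.card_coe_set_eq]
  exact he

/-- If `C` is closed under adjacency avoiding `S`, then any walk leaving `C`
produces a vertex of `S` adjacent to a vertex of `C`. -/
private lemma exists_adj_of_closed {S C : Set V}
    (hC : ∀ x ∈ C, ∀ y, G.Adj x y → y ∉ S → y ∈ C) :
    ∀ {x y : V}, G.Walk x y → x ∈ C → y ∉ C → ∃ s ∈ S, ∃ c ∈ C, G.Adj c s := by
  intro x y w
  induction w with
  | nil => intro h1 h2; exact absurd h1 h2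
  | @cons u u' y' h p ih =>
    intro h1 h2
    by_cases hs : u' ∈ S
    · exact ⟨u', hs, u, h1, h⟩
    · exact ih (hC u h1 u' h hs) h2

private lemma exists_pm_one (hext : KExtendable G 2) {v c : V} (h : G.Adj v c) :
    ∃ M : G.Subgraph, M.IsPerfectMatching ∧ M.Adj v c := by
  obtain ⟨P, hle, hP⟩ := hext (G.subgraphOfAdj h)
    (SimpleGraph.Subgraph.IsMatching.subgraphOfAdj h)
    (by rw [SimpleGraph.edgeSet_subgraphOfAdj, Set.ncard_singleton]; norm_num)
  exact ⟨P, hP, hle.2 (by simp)⟩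

private lemma exists_pm_two (hext : KExtendable G 2) {v c w d : V}
    (h1 : G.Adj v c) (h2 : G.Adj w d)
    (hvw : v ≠ w) (hvd : v ≠ d) (hcw : c ≠ w) (hcd : c ≠ d) :
    ∃ M : G.Subgraph, M.IsPerfectMatching ∧ M.Adj v c ∧ M.Adj w d := by
  have hdisj : Disjoint (G.subgraphOfAdj h1).support (G.subgraphOfAdj h2).support := by
    rw [SimpleGraph.support_subgraphOfAdj, SimpleGraph.support_subgraphOfAdj]
    rw [Set.disjoint_left]
    rintro x (rfl | rfl) hx <;>
      simp only [Set.mem_insert_iff, Set.mem_singleton_iff] at hx <;>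
      tauto
  have hm : (G.subgraphOfAdj h1 ⊔ G.subgraphOfAdj h2).IsMatching :=
    (SimpleGraph.Subgraph.IsMatching.subgraphOfAdj h1).sup
      (SimpleGraph.Subgraph.IsMatching.subgraphOfAdj h2) hdisj
  have hcardle : (G.subgraphOfAdj h1 ⊔ G.subgraphOfAdj h2).edgeSet.ncard ≤ 2 := by
    rw [SimpleGraph.Subgraph.edgeSet_sup, SimpleGraph.edgeSet_subgraphOfAdj,
      SimpleGraph.edgeSet_subgraphOfAdj]
    calc ({s(v, c)} ∪ {s(w, d)} : Set (Sym2 V)).ncard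
        ≤ ({s(v, c)} : Set (Sym2 V)).ncard + ({s(w, d)} : Set (Sym2 V)).ncard :=
          Set.ncard_union_le _ _
      _ ≤ 2 := by rw [Set.ncard_singleton, Set.ncard_singleton]
  obtain ⟨P, hle, hP⟩ := hext _ hm hcardle
  exact ⟨P, hP, hle.2 (by simp), hle.2 (by simp)⟩

/-- No cutvertex: two nonempty sets, each closed under adjacency avoiding `v`,
cannot be disjoint (with `v` outside both). -/
private lemma no_one_cut [Fintype V] (hext : KExtendable G 2) (hconn : G.Connected)
    {C D : Set V} {v : V} (hdisj : ∀ x, x ∈ C → x ∈ D → False)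
    (hC : C.Nonempty) (hD : D.Nonempty) (hvC : v ∉ C) (hvD : v ∉ D)
    (hCcl : ∀ x ∈ C, ∀ y, G.Adj x y → y ≠ v → y ∈ C)
    (hDcl : ∀ x ∈ D, ∀ y, G.Adj x y → y ≠ v → y ∈ D) : False := by
  classical
  obtain ⟨a, ha⟩ := hC
  obtain ⟨b, hb⟩ := hD
  have hbC : b ∉ C := fun h => hdisj b h hb
  -- get a vertex of C adjacent to v
  obtain ⟨wab⟩ := hconn.preconnected a b
  obtain ⟨s, hs, c, hcC, hadjc⟩ := exists_adj_of_closed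
    (S := {v}) (C := C)
    (fun x hx y hxy hy => hCcl x hx y hxy (by simpa using hy)) wab ha hbC
  rw [Set.mem_singleton_iff] at hs; rw [hs] at hadjc; clear hs
  -- get a vertex of D adjacent to v
  have haD' : a ∉ D := fun h => hdisj a ha h
  obtain ⟨wba⟩ := hconn.preconnected b a
  obtain ⟨s', hs', d, hdD, hadjd⟩ := exists_adj_of_closed
    (S := {v}) (C := D)
    (fun x hx y hxy hy => hDcl x hx y hxy (by simpa using hy)) wba hb haD'
  rw [Set.mem_singleton_iff] at hs'; rw [hs'] at hadjd; clear hs'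
  -- D is even
  obtain ⟨M1, hM1, hM1adj⟩ := exists_pm_one hext hadjc.symm
  have heven : Even D.ncard := by
    refine even_ncard_of_closed hM1 fun z hz y hzy => ?_
    by_cases hyv : y = v
    · have : z = c := matching_eq_of_adj hM1.1 (hyv ▸ hzy).symm hM1adj
      exact absurd (this ▸ hz) (fun h => hdisj c hcC h)
    · exact hDcl z hz y (M1.adj_sub hzy) hyv
  -- D is odd
  obtain ⟨M2, hM2, hM2adj⟩ := exists_pm_one hext hadjd.symm
  have hodd : Even (D \ {d}).ncard := by
    refine even_ncard_of_closed hM2 fun z hz y hzy => ?_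
    obtain ⟨hzD, hzd⟩ := hz
    by_cases hyv : y = v
    · exact absurd (matching_eq_of_adj hM2.1 (hyv ▸ hzy).symm hM2adj) hzd
    · by_cases hyd : y = d
      · have : z = v := matching_eq_of_adj hM2.1 (hyd ▸ hzy).symm hM2adj.symm
        exact absurd (this ▸ hzD) hvD
      · exact ⟨hDcl z hzD y (M2.adj_sub hzy) hyv, hyd⟩
  have hsum : (D \ {d}).ncard + 1 = D.ncard := Set.ncard_diff_singleton_add_one hdD
  rw [← hsum, Nat.even_add_one] at heven
  exact heven hodd

private lemma no_two_cut [Fintype V] (hext : KExtendable G 2) (hconn : G.Connected)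
    (hcard : 5 ≤ Fintype.card V)
    {C D : Set V} {v w : V} (hvw : v ≠ w)
    (hdisj : ∀ x, x ∈ C → x ∈ D → False)
    (hC : C.Nonempty) (hD : D.Nonempty)
    (hvC : v ∉ C) (hvD : v ∉ D) (hwC : w ∉ C) (hwD : w ∉ D)
    (hCcl : ∀ x ∈ C, ∀ y, G.Adj x y → y ≠ v → y ≠ w → y ∈ C)
    (hDcl : ∀ x ∈ D, ∀ y, G.Adj x y → y ≠ v → y ≠ w → y ∈ D) : False := by
  classical
  -- Step A: each of v, w has a neighbour in each of C, D
  have key : ∀ p q : V, p ≠ q → ∀ E : Set V, E.Nonempty → p ∉ E → q ∉ E →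
      (∀ x ∈ E, ∀ y, G.Adj x y → y ≠ p → y ≠ q → y ∈ E) →
      ∃ e ∈ E, G.Adj q e := by
    intro p q hpq E hE hpE hqE hEcl
    by_contra hno
    push_neg at hno
    refine no_one_cut hext hconn (C := E) (D := (E ∪ {p})ᶜ) (v := p)
      (fun x hx hx' => hx' (Or.inl hx)) hE ⟨q, ?_⟩ hpE (fun h => h (Or.inr rfl))
      ?_ ?_
    · intro h
      rcases h with h | h
      · exact hqE h
      · exact hpq ((Set.mem_singleton_iff.1 h).symm)
    · intro x hx y hxy hyp
      by_cases hyq : y = q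
      · subst hyq; exact absurd hxy.symm (hno x hx)
      · exact hEcl x hx y hxy hyp hyq
    · intro x hx y hxy hyp
      intro hmem
      rcases hmem with hyE | hyp'
      · have hxq : x ≠ q := by
          intro h; subst h; exact hno y hyE hxy
        have hxp : x ≠ p := fun h => hx (Or.inr h)
        exact hx (Or.inl (hEcl y hyE x hxy.symm hxp hxq))
      · exact hyp (by simpa using hyp')
  obtain ⟨cv, hcvC, hcv⟩ := key w v hvw.symm C hC hwC hvC
    (fun x hx y hxy h1 h2 => hCcl x hx y hxy h2 h1)
  obtain ⟨cw, hcwC, hcw⟩ := key v w hvw C hC hvC hwC hCcl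
  obtain ⟨dv, hdvD, hdv⟩ := key w v hvw.symm D hD hwD hvD
    (fun x hx y hxy h1 h2 => hDcl x hx y hxy h2 h1)
  obtain ⟨dw, hdwD, hdw⟩ := key v w hvw D hD hvD hwD hDcl
  -- Step B: C and D are odd, via the matching {v cv, w dw}
  have hne_vd : v ≠ dw := fun h => hvD (h ▸ hdwD)
  have hne_cw : cv ≠ w := fun h => hwC (h ▸ hcvC)
  have hne_cd : cv ≠ dw := fun h => hdisj cv hcvC (h ▸ hdwD)
  obtain ⟨M1, hM1, hM1v, hM1w⟩ := exists_pm_two hext hcv hdw hvw hne_vd hne_cw hne_cd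
  have hCodd : ¬ Even C.ncard := by
    have hevenC : Even (C \ {cv}).ncard := by
      refine even_ncard_of_closed hM1 fun z hz y hzy => ?_
      obtain ⟨hzC, hzc⟩ := hz
      by_cases hyv : y = v
      · exact absurd (matching_eq_of_adj hM1.1 (hyv ▸ hzy).symm hM1v) hzc
      by_cases hyw : y = w
      · have : z = dw := matching_eq_of_adj hM1.1 (hyw ▸ hzy).symm hM1w
        exact absurd (this ▸ hzC) (fun h => hdisj dw h hdwD)
      by_cases hyc : y = cv
      · have : z = v := matching_eq_of_adj hM1.1 (hyc ▸ hzy).symm hM1v.symm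
        exact absurd (this ▸ hzC) hvC
      · exact ⟨hCcl z hzC y (M1.adj_sub hzy) hyv hyw, hyc⟩
    have hsum : (C \ {cv}).ncard + 1 = C.ncard := Set.ncard_diff_singleton_add_one hcvC
    rw [← hsum, Nat.even_add_one]
    exact fun h => h hevenC
  have hDodd : ¬ Even D.ncard := by
    have hevenD : Even (D \ {dw}).ncard := by
      refine even_ncard_of_closed hM1 fun z hz y hzy => ?_
      obtain ⟨hzD, hzd⟩ := hz
      by_cases hyv : y = v
      · have : z = cv := matching_eq_of_adj hM1.1 (hyv ▸ hzy).symm hM1v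
        exact absurd (this ▸ hzD) (fun h => hdisj cv hcvC h)
      by_cases hyw : y = w
      · exact absurd (matching_eq_of_adj hM1.1 (hyw ▸ hzy).symm hM1w) hzd
      by_cases hyd : y = dw
      · have : z = w := matching_eq_of_adj hM1.1 (hyd ▸ hzy).symm hM1w.symm
        exact absurd (this ▸ hzD) hwD
      · exact ⟨hDcl z hzD y (M1.adj_sub hzy) hyv hyw, hyd⟩
    have hsum : (D \ {dw}).ncard + 1 = D.ncard := Set.ncard_diff_singleton_add_one hdwD
    rw [← hsum, Nat.even_add_one]
    exact fun h => h hevenD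
  -- Step C: all S-neighbours inside a component coincide
  have sing : ∀ E : Set V, E.Nonempty → v ∉ E → w ∉ E →
      (∀ x ∈ E, ∀ y, G.Adj x y → y ≠ v → y ≠ w → y ∈ E) →
      ¬ Even E.ncard →
      ∀ p, p ∈ E → ∀ q, q ∈ E → G.Adj v p → G.Adj w q → p = q := by
    intro E hE hvE hwE hEcl hEodd p hpE q hqE hvp hwq
    by_contra hpq
    have hne1 : v ≠ q := fun h => hvE (h ▸ hqE)
    have hne2 : p ≠ w := fun h => hwE (h ▸ hpE)
    obtain ⟨M2, hM2, hM2v, hM2w⟩ := exists_pm_two hext hvp hwq hvw hne1 hne2 hpq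
    have heven2 : Even ((E \ {q}) \ {p}).ncard := by
      refine even_ncard_of_closed hM2 fun z hz y hzy => ?_
      obtain ⟨⟨hzE, hzq⟩, hzp⟩ := hz
      by_cases hyv : y = v
      · exact absurd (matching_eq_of_adj hM2.1 (hyv ▸ hzy).symm hM2v) hzp
      by_cases hyw : y = w
      · exact absurd (matching_eq_of_adj hM2.1 (hyw ▸ hzy).symm hM2w) hzq
      by_cases hyp' : y = p
      · have : z = v := matching_eq_of_adj hM2.1 (hyp' ▸ hzy).symm hM2v.symm
        exact absurd (this ▸ hzE) hvE
      by_cases hyq : y = q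
      · have : z = w := matching_eq_of_adj hM2.1 (hyq ▸ hzy).symm hM2w.symm
        exact absurd (this ▸ hzE) hwE
      · exact ⟨⟨hEcl z hzE y (M2.adj_sub hzy) hyv hyw, hyq⟩, hyp'⟩
    have hpEq : p ∈ E \ {q} := ⟨hpE, hpq⟩
    have hsum1 : ((E \ {q}) \ {p}).ncard + 1 = (E \ {q}).ncard :=
      Set.ncard_diff_singleton_add_one hpEq
    have hsum2 : (E \ {q}).ncard + 1 = E.ncard :=
      Set.ncard_diff_singleton_add_one hqE
    apply hEodd
    rw [← hsum2, ← hsum1]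
    obtain ⟨k, hk⟩ := heven2
    exact ⟨k + 1, by omega⟩
  have hCsing : ∀ p, p ∈ C → ∀ q, q ∈ C → G.Adj v p → G.Adj w q → p = q :=
    sing C hC hvC hwC hCcl hCodd
  have hDsing : ∀ p, p ∈ D → ∀ q, q ∈ D → G.Adj v p → G.Adj w q → p = q :=
    sing D hD hvD hwD hDcl hDodd
  -- Step D/E: both components are singletons with neighbourhood ⊆ {v, w}
  have collapse : ∀ E : Set V, E.Nonempty → v ∉ E → w ∉ E →
      (∀ x ∈ E, ∀ y, G.Adj x y → y ≠ v → y ≠ w → y ∈ E) →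
      (∀ p, p ∈ E → ∀ q, q ∈ E → G.Adj v p → G.Adj w q → p = q) →
      ∀ x, x ∈ E → G.Adj v x → G.Adj w x →
      E = {x} ∧ ∀ y, G.Adj x y → y = v ∨ y = w := by
    intro E hE hvE hwE hEcl hEsing x hxE hvx hwx
    have hEx : E = {x} := by
      by_contra hEx
      have hc0 : ∃ c0 ∈ E, c0 ≠ x := by
        by_contra hall
        push_neg at hall
        apply hEx
        ext z
        exact ⟨fun hz => hall z hz, fun hz => (Set.mem_singleton_iff.1 hz) ▸ hxE⟩
      obtain ⟨c0, hc0E, hc0x⟩ := hc0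
      refine no_one_cut hext hconn (C := E \ {x}) (D := Eᶜ \ {x}) (v := x)
        (fun z hz hz' => hz'.1 hz.1) ⟨c0, hc0E, hc0x⟩ ⟨v, hvE, fun h => hvE ((h : v = x) ▸ hxE)⟩
        (fun h => h.2 rfl) (fun h => h.2 rfl) ?_ ?_
      · intro z hz y hzy hyx
        by_cases hyv : y = v
        · subst hyv
          exact absurd (hEsing z hz.1 x hxE hzy.symm hwx) hz.2
        by_cases hyw : y = w
        · subst hyw
          exact absurd (hEsing x hxE z hz.1 hvx hzy.symm).symm hz.2
        · exact ⟨hEcl z hz.1 y hzy hyv hyw, hyx⟩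
      · intro z hz y hzy hyx
        constructor
        · intro hyE
          apply hz.1
          have hzv : z ≠ v := by
            intro h; subst h
            exact hyx (hEsing y hyE x hxE hzy hwx)
          have hzw : z ≠ w := by
            intro h; subst h
            exact hyx (hEsing x hxE y hyE hvx hzy).symm
          exact hEcl y hyE z hzy.symm hzv hzw
        · exact hyx
    refine ⟨hEx, fun y hxy => ?_⟩
    by_cases hyv : y = v
    · exact Or.inl hyv
    by_cases hyw : y = w
    · exact Or.inr hyw
    · exfalso
      have : y ∈ E := hEcl x hxE y hxy hyv hyw
      rw [hEx] at this
      exact G.loopless.irrefl x ((Set.mem_singleton_iff.1 this) ▸ hxy)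
  have hcvcw : cv = cw := hCsing cv hcvC cw hcwC hcv hcw
  have hdvdw : dv = dw := hDsing dv hdvD dw hdwD hdv hdw
  obtain ⟨hCx, hxN⟩ := collapse C hC hvC hwC hCcl hCsing cv hcvC hcv (hcvcw ▸ hcw)
  obtain ⟨hDy, hyN⟩ := collapse D hD hvD hwD hDcl hDsing dw hdwD (hdvdw ▸ hdv) hdw
  set x := cv with hxdef
  set y := dw with hydef
  -- Step F
  have hxy : x ≠ y := fun h => hdisj x hcvC (h ▸ hdwD)
  by_cases hR : (({v, w, x, y} : Set V)ᶜ).Nonempty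
  · obtain ⟨z, hz⟩ := hR
    have hRcl : ∀ r ∈ ({v, w, x, y} : Set V)ᶜ, ∀ y', G.Adj r y' →
        y' ∉ ({v, w} : Set V) → y' ∈ ({v, w, x, y} : Set V)ᶜ := by
      intro r hr y' hry hy'
      simp only [Set.mem_compl_iff, Set.mem_insert_iff, Set.mem_singleton_iff] at hr ⊢
      push_neg at hr ⊢
      simp only [Set.mem_insert_iff, Set.mem_singleton_iff] at hy'
      push_neg at hy'
      refine ⟨hy'.1, hy'.2, ?_, ?_⟩
      · intro h; subst h
        rcases hxN r hry.symm with h | h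
        · exact hr.1 h
        · exact hr.2.1 h
      · intro h; subst h
        rcases hyN r hry.symm with h | h
        · exact hr.1 h
        · exact hr.2.1 h
    have hxnotR : x ∉ ({v, w, x, y} : Set V)ᶜ := fun h =>
      h (Or.inr (Or.inr (Or.inl rfl)))
    obtain ⟨wzx⟩ := hconn.preconnected z x
    obtain ⟨s, hs, r, hrR, hradj⟩ := exists_adj_of_closed
      (S := ({v, w} : Set V)) hRcl wzx hz hxnotR
    have hrvw : r ≠ v ∧ r ≠ w ∧ r ≠ x ∧ r ≠ y := by
      simp only [Set.mem_compl_iff, Set.mem_insert_iff, Set.mem_singleton_iff] at hrR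
      push_neg at hrR
      exact hrR
    rw [Set.mem_insert_iff, Set.mem_singleton_iff] at hs
    rcases hs with hsv | hsw
    · -- s = v : use matching {v r, w y}
      rw [hsv] at hradj
      have hne1 : v ≠ y := fun h => hvD (h ▸ hdwD)
      obtain ⟨M, hM, hMv, hMw⟩ := exists_pm_two hext hradj.symm hdw hvw hne1 hrvw.2.1
        hrvw.2.2.2
      obtain ⟨p, hp, -⟩ := hM.1 (hM.2 x)
      rcases hxN p (M.adj_sub hp) with hpv | hpw
      · rw [hpv] at hp
        exact hrvw.2.2.1 (matching_eq_of_adj hM.1 hMv hp.symm)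
      · rw [hpw] at hp
        exact hxy (matching_eq_of_adj hM.1 hMw hp.symm).symm
    · -- s = w : use matching {w r, v y}
      rw [hsw] at hradj
      have hvy : G.Adj v y := hdvdw ▸ hdv
      have hne1 : v ≠ r := fun h => hrvw.1 h.symm
      have hne2 : y ≠ w := fun h => hwD (h ▸ hdwD)
      have hne3 : y ≠ r := fun h => hrvw.2.2.2 h.symm
      obtain ⟨M, hM, hMv, hMw⟩ := exists_pm_two hext hvy hradj.symm hvw hne1 hne2 hne3
      obtain ⟨p, hp, -⟩ := hM.1 (hM.2 x)
      rcases hxN p (M.adj_sub hp) with hpv | hpw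
      · rw [hpv] at hp
        exact hxy (matching_eq_of_adj hM.1 hMv hp.symm).symm
      · rw [hpw] at hp
        exact hrvw.2.2.1 (matching_eq_of_adj hM.1 hMw hp.symm)
  · -- V = {v, w, x, y} has at most 4 vertices, contradicting 5 ≤ |V|
    rw [Set.not_nonempty_iff_eq_empty, Set.compl_empty_iff] at hR
    have hle : (Set.univ : Set V).ncard ≤ 4 := by
      rw [← hR]
      calc ({v, w, x, y} : Set V).ncard ≤ ({w, x, y} : Set V).ncard + 1 :=
            Set.ncard_insert_le _ _
        _ ≤ (({x, y} : Set V).ncard + 1) + 1 := by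
            have := Set.ncard_insert_le w ({x, y} : Set V); omega
        _ ≤ ((({y} : Set V).ncard + 1) + 1) + 1 := by
            have := Set.ncard_insert_le x ({y} : Set V); omega
        _ ≤ 4 := by rw [Set.ncard_singleton]
    rw [Set.ncard_univ, Nat.card_eq_fintype_card] at hle
    omega

end BraceAux

/-- Every connected brace on at least five vertices is 3-connected. -/
theorem brace_threeConnected [Fintype V] (G : SimpleGraph V)
    (hbrace : IsBrace G) (hconn : G.Connected) (hcard : 5 ≤ Fintype.card V) :
    KConnected G 3 := by
  classical
  obtain ⟨-, hext⟩ := hbrace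
  constructor
  · omega
  · intro S hS
    have hSle : S.ncard ≤ 2 := by omega
    have hSne : S ≠ Set.univ := by
      intro h
      rw [h, Set.ncard_univ, Nat.card_eq_fintype_card] at hSle
      omega
    have hnonempty : Nonempty (Sᶜ : Set V) := by
      rcases Set.exists_of_ssubset (Set.ssubset_univ_iff.2 hSne) with ⟨x, -, hx⟩
      exact ⟨⟨x, hx⟩⟩
    rw [SimpleGraph.connected_iff]
    refine ⟨?_, hnonempty⟩
    intro a b
    by_contra hab
    -- reachability components of a and b
    set Ca : Set V := {x : V | ∃ hx : x ∈ (Sᶜ : Set V),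
      (G.induce (Sᶜ : Set V)).Reachable a ⟨x, hx⟩} with hCadef
    set Cb : Set V := {x : V | ∃ hx : x ∈ (Sᶜ : Set V),
      (G.induce (Sᶜ : Set V)).Reachable b ⟨x, hx⟩} with hCbdef
    have haCa : (a : V) ∈ Ca := ⟨a.2, by rw [Subtype.eta]⟩
    have hbCb : (b : V) ∈ Cb := ⟨b.2, by rw [Subtype.eta]⟩
    have hdisj : ∀ x, x ∈ Ca → x ∈ Cb → False := by
      rintro x ⟨hx1, hr1⟩ ⟨hx2, hr2⟩
      exact hab (hr1.trans hr2.symm)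
    have hCacl : ∀ x ∈ Ca, ∀ y, G.Adj x y → y ∉ S → y ∈ Ca := by
      rintro x ⟨hx, hr⟩ y hxy hy
      refine ⟨hy, hr.trans (SimpleGraph.Adj.reachable ?_)⟩
      exact hxy
    have hCbcl : ∀ x ∈ Cb, ∀ y, G.Adj x y → y ∉ S → y ∈ Cb := by
      rintro x ⟨hx, hr⟩ y hxy hy
      refine ⟨hy, hr.trans (SimpleGraph.Adj.reachable ?_)⟩
      exact hxy
    have hbnotCa : (b : V) ∉ Ca := by
      rintro ⟨hx, hr⟩
      rw [Subtype.eta] at hr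
      exact hab hr
    rcases (show S.ncard = 0 ∨ S.ncard = 1 ∨ S.ncard = 2 by omega) with h0 | h1 | h2
    · rw [Set.ncard_eq_zero] at h0
      subst h0
      obtain ⟨wab⟩ := hconn.preconnected (a : V) (b : V)
      obtain ⟨s, hs, -⟩ := exists_adj_of_closed
        (S := (∅ : Set V)) (C := Ca) hCacl wab haCa hbnotCa
      exact hs
    · obtain ⟨v, hv⟩ := Set.ncard_eq_one.1 h1
      subst hv
      refine no_one_cut hext hconn (C := Ca) (D := Cb) (v := v) hdisj
        ⟨_, haCa⟩ ⟨_, hbCb⟩ (fun ⟨h, _⟩ => h rfl) (fun ⟨h, _⟩ => h rfl) ?_ ?_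
      · intro z hz y hzy hyv
        exact hCacl z hz y hzy (by simpa using hyv)
      · intro z hz y hzy hyv
        exact hCbcl z hz y hzy (by simpa using hyv)
    · obtain ⟨v, w, hvw, hvweq⟩ := Set.ncard_eq_two.1 h2
      subst hvweq
      refine no_two_cut hext hconn hcard (C := Ca) (D := Cb) hvw hdisj
        ⟨_, haCa⟩ ⟨_, hbCb⟩
        (fun ⟨h, _⟩ => h (Or.inl rfl)) (fun ⟨h, _⟩ => h (Or.inl rfl))
        (fun ⟨h, _⟩ => h (Or.inr rfl)) (fun ⟨h, _⟩ => h (Or.inr rfl)) ?_ ?_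
      · intro z hz y hzy hyv hyw
        refine hCacl z hz y hzy ?_
        simp only [Set.mem_insert_iff, Set.mem_singleton_iff]
        push_neg
        exact ⟨hyv, hyw⟩
      · intro z hz y hzy hyv hyw
        refine hCbcl z hz y hzy ?_
        simp only [Set.mem_insert_iff, Set.mem_singleton_iff]
        push_neg
        exact ⟨hyv, hyw⟩
end

section
/- Let a bipartite graph G contain a bipartite graph H (i.e., some even subdivision of H is isomorphic to a central subgraph of G). If G admits a Pfaffian orientation, then so does H. -/
open SimpleGraph

universe u v

variable {V : Type u} {W : Type v}

section PfaffianAux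

open SimpleGraph Walk

variable {G : SimpleGraph V} {H : SimpleGraph W}

lemma forwardCount_append (o : GraphOrientation G) {a b c : V} (w : G.Walk a b)
    (w' : G.Walk b c) :
    forwardCount o (w.append w') = forwardCount o w + forwardCount o w' := by
  simp [forwardCount, Walk.darts_append, List.countP_append]

lemma forwardCount_add_reverse (o : GraphOrientation G) {a b : V} (w : G.Walk a b) :
    forwardCount o w + forwardCount o w.reverse = w.length := by
  classical
  unfold forwardCount
  rw [Walk.darts_reverse, List.countP_reverse, List.countP_map]
  have hcongr : ∀ d ∈ w.darts,
      (((fun d : G.Dart => decide (o.dir d.fst d.snd)) ∘ SimpleGraph.Dart.symm) d = true ↔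
        (fun d : G.Dart => !(decide (o.dir d.fst d.snd))) d = true) := by
    intro d _
    by_cases h : o.dir d.fst d.snd
    · simp [h, o.asymm _ _ h]
    · have h2 := (o.adj_iff d.fst d.snd).1 d.adj
      have h3 : o.dir d.snd d.fst := by tauto
      simp [h, h3]
  rw [List.countP_congr hcongr]
  rw [← Walk.length_darts]
  have hlen := (List.length_eq_countP_add_countP
    (fun d : G.Dart => decide (o.dir d.fst d.snd)) (l := w.darts)).symm
  simpa [decide_not] using hlen

lemma getVert_eq_support_getElem? {a b : V} (w : G.Walk a b) {i : ℕ} (hi : i ≤ w.length) :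
    w.support[i]? = some (w.getVert i) := by
  induction w generalizing i with
  | nil =>
    simp only [Walk.length_nil, Nat.le_zero] at hi
    subst hi
    simp [Walk.support_nil]
  | cons h q ih =>
    cases i with
    | zero => simp
    | succ n =>
      simp only [Walk.support_cons, Walk.length_cons, Nat.succ_le_succ_iff] at hi ⊢
      rw [List.getElem?_cons_succ, Walk.getVert_cons_succ]
      exact ih hi

lemma getVert_injOn_of_isPath {a b : V} {w : G.Walk a b} (hw : w.IsPath) {i j : ℕ}
    (hi : i ≤ w.length) (hj : j ≤ w.length) (h : w.getVert i = w.getVert j) : i = j := by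
  apply (List.getElem?_inj (l := w.support) (i := i) (j := j) (by rw [Walk.length_support]; omega)
    hw.support_nodup).1
  rw [_root_.getVert_eq_support_getElem? _ hi, _root_.getVert_eq_support_getElem? _ hj, h]

/-- Pairing of consecutive vertices `(2i, 2i+1)` along a walk. -/
def FullPair {a b : V} (w : G.Walk a b) (x y : V) : Prop :=
  ∃ i, i % 2 = 0 ∧ i < w.length ∧
    ((x = w.getVert i ∧ y = w.getVert (i + 1)) ∨ (y = w.getVert i ∧ x = w.getVert (i + 1)))

/-- Pairing of consecutive vertices `(2i+1, 2i+2)` along a walk. -/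
def IntPair {a b : V} (w : G.Walk a b) (x y : V) : Prop :=
  ∃ i, i % 2 = 1 ∧ i + 1 < w.length ∧
    ((x = w.getVert i ∧ y = w.getVert (i + 1)) ∨ (y = w.getVert i ∧ x = w.getVert (i + 1)))

lemma FullPair.symm {a b x y : V} {w : G.Walk a b} (h : FullPair w x y) : FullPair w y x := by
  obtain ⟨i, h1, h2, h3⟩ := h
  exact ⟨i, h1, h2, h3.symm⟩

lemma IntPair.symm {a b x y : V} {w : G.Walk a b} (h : IntPair w x y) : IntPair w y x := by
  obtain ⟨i, h1, h2, h3⟩ := h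
  exact ⟨i, h1, h2, h3.symm⟩

lemma FullPair.adj {a b x y : V} {w : G.Walk a b} (h : FullPair w x y) : G.Adj x y := by
  obtain ⟨i, _, h2, h3⟩ := h
  rcases h3 with ⟨rfl, rfl⟩ | ⟨rfl, rfl⟩
  · exact w.adj_getVert_succ h2
  · exact (w.adj_getVert_succ h2).symm

lemma IntPair.adj {a b x y : V} {w : G.Walk a b} (h : IntPair w x y) : G.Adj x y := by
  obtain ⟨i, _, h2, h3⟩ := h
  rcases h3 with ⟨rfl, rfl⟩ | ⟨rfl, rfl⟩
  · exact w.adj_getVert_succ (by omega)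
  · exact (w.adj_getVert_succ (by omega)).symm

lemma FullPair.mem_left {a b x y : V} {w : G.Walk a b} (h : FullPair w x y) :
    x ∈ w.support := by
  obtain ⟨i, _, h2, h3⟩ := h
  rcases h3 with ⟨rfl, -⟩ | ⟨-, rfl⟩
  · exact Walk.mem_support_iff_exists_getVert.2 ⟨i, rfl, by omega⟩
  · exact Walk.mem_support_iff_exists_getVert.2 ⟨i + 1, rfl, by omega⟩

lemma IntPair.mem_left {a b x y : V} {w : G.Walk a b} (h : IntPair w x y) :
    x ∈ w.support := by
  obtain ⟨i, _, h2, h3⟩ := h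
  rcases h3 with ⟨rfl, -⟩ | ⟨-, rfl⟩
  · exact Walk.mem_support_iff_exists_getVert.2 ⟨i, rfl, by omega⟩
  · exact Walk.mem_support_iff_exists_getVert.2 ⟨i + 1, rfl, by omega⟩

lemma IntPair.ne_ends {a b x y : V} {w : G.Walk a b} (hw : w.IsPath) (h : IntPair w x y) :
    x ≠ a ∧ x ≠ b := by
  obtain ⟨i, h1, h2, h3⟩ := h
  have hend : ∀ k, 0 < k → k < w.length → w.getVert k ≠ a ∧ w.getVert k ≠ b := by
    intro k hk0 hkL
    constructor
    · intro hh
      have hh' : w.getVert k = w.getVert 0 := by rw [w.getVert_zero]; exact hh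
      have := getVert_injOn_of_isPath hw (by omega) (by omega) hh'
      omega
    · intro hh
      have hh' : w.getVert k = w.getVert w.length := by rw [w.getVert_length]; exact hh
      have := getVert_injOn_of_isPath hw (by omega) (by omega) hh'
      omega
  rcases h3 with ⟨rfl, -⟩ | ⟨-, rfl⟩
  · exact hend i (by omega) (by omega)
  · exact hend (i + 1) (by omega) (by omega)

lemma FullPair.unique {a b x y y' : V} {w : G.Walk a b} (hw : w.IsPath)
    (h : FullPair w x y) (h' : FullPair w x y') : y = y' := by
  obtain ⟨i, h1, h2, h3⟩ := h
  obtain ⟨j, h1', h2', h3'⟩ := h'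
  rcases h3 with ⟨hx, hy⟩ | ⟨hy, hx⟩ <;> rcases h3' with ⟨hx', hy'⟩ | ⟨hy', hx'⟩
  · have := getVert_injOn_of_isPath hw (i := i) (j := j) (by omega) (by omega)
      (hx ▸ hx' ▸ rfl)
    subst this; rw [hy, hy']
  · have := getVert_injOn_of_isPath hw (i := i) (j := j + 1) (by omega) (by omega)
      (hx ▸ hx' ▸ rfl)
    omega
  · have := getVert_injOn_of_isPath hw (i := i + 1) (j := j) (by omega) (by omega)
      (hx ▸ hx' ▸ rfl)
    omega
  · have := getVert_injOn_of_isPath hw (i := i + 1) (j := j + 1) (by omega) (by omega)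
      (hx ▸ hx' ▸ rfl)
    have : i = j := by omega
    subst this; rw [hy, hy']

lemma IntPair.unique {a b x y y' : V} {w : G.Walk a b} (hw : w.IsPath)
    (h : IntPair w x y) (h' : IntPair w x y') : y = y' := by
  obtain ⟨i, h1, h2, h3⟩ := h
  obtain ⟨j, h1', h2', h3'⟩ := h'
  rcases h3 with ⟨hx, hy⟩ | ⟨hy, hx⟩ <;> rcases h3' with ⟨hx', hy'⟩ | ⟨hy', hx'⟩
  · have := getVert_injOn_of_isPath hw (i := i) (j := j) (by omega) (by omega)
      (hx ▸ hx' ▸ rfl)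
    subst this; rw [hy, hy']
  · have := getVert_injOn_of_isPath hw (i := i) (j := j + 1) (by omega) (by omega)
      (hx ▸ hx' ▸ rfl)
    omega
  · have := getVert_injOn_of_isPath hw (i := i + 1) (j := j) (by omega) (by omega)
      (hx ▸ hx' ▸ rfl)
    omega
  · have := getVert_injOn_of_isPath hw (i := i + 1) (j := j + 1) (by omega) (by omega)
      (hx ▸ hx' ▸ rfl)
    have : i = j := by omega
    subst this; rw [hy, hy']

lemma FullPair.exists_of {a b : V} {w : G.Walk a b} (hL : w.length % 2 = 1)
    {i : ℕ} (hi : i ≤ w.length) : ∃ y, FullPair w (w.getVert i) y := by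
  by_cases hp : i % 2 = 0
  · exact ⟨w.getVert (i + 1), i, hp, by omega, Or.inl ⟨rfl, rfl⟩⟩
  · refine ⟨w.getVert (i - 1), i - 1, by omega, by omega, Or.inr ⟨rfl, ?_⟩⟩
    congr 1
    omega

lemma IntPair.exists_of {a b : V} {w : G.Walk a b} (hL : w.length % 2 = 1)
    {i : ℕ} (h0 : 0 < i) (hi : i < w.length) : ∃ y, IntPair w (w.getVert i) y := by
  by_cases hp : i % 2 = 1
  · exact ⟨w.getVert (i + 1), i, hp, by omega, Or.inl ⟨rfl, rfl⟩⟩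
  · refine ⟨w.getVert (i - 1), i - 1, by omega, by omega, Or.inr ⟨rfl, ?_⟩⟩
    congr 1
    omega

lemma FullPair.of_reverse {a b x y : V} {w : G.Walk a b} (hL : w.length % 2 = 1)
    (h : FullPair w.reverse x y) : FullPair w x y := by
  obtain ⟨i, h1, h2, h3⟩ := h
  rw [Walk.length_reverse] at h2
  have e1 : w.reverse.getVert i = w.getVert (w.length - i) := w.getVert_reverse i
  have e2 : w.reverse.getVert (i + 1) = w.getVert (w.length - i - 1) := by
    rw [w.getVert_reverse]
    congr 1 <;> omega
  refine ⟨w.length - i - 1, by omega, by omega, ?_⟩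
  have e3 : w.length - i - 1 + 1 = w.length - i := by omega
  rw [e1, e2] at h3
  rw [e3]
  tauto

lemma IntPair.of_reverse {a b x y : V} {w : G.Walk a b} (hL : w.length % 2 = 1)
    (h : IntPair w.reverse x y) : IntPair w x y := by
  obtain ⟨i, h1, h2, h3⟩ := h
  rw [Walk.length_reverse] at h2
  have e1 : w.reverse.getVert i = w.getVert (w.length - i) := w.getVert_reverse i
  have e2 : w.reverse.getVert (i + 1) = w.getVert (w.length - i - 1) := by
    rw [w.getVert_reverse]
    congr 1 <;> omega
  refine ⟨w.length - i - 1, by omega, by omega, ?_⟩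
  have e3 : w.length - i - 1 + 1 = w.length - i := by omega
  rw [e1, e2] at h3
  rw [e3]
  tauto

end PfaffianAux

section SubWalkAux

open SimpleGraph Walk

variable {G : SimpleGraph V} {H : SimpleGraph W}

variable (f : W → V) (p : ∀ u v : W, H.Adj u v → G.Walk (f u) (f v))

/-- The walk in `G` obtained from a walk in `H` by replacing each edge with
its subdivision path. -/
def subWalk : ∀ {x y : W}, H.Walk x y → G.Walk (f x) (f y)
  | _, _, .nil => .nil
  | _, _, .cons h q => (p _ _ h).append (subWalk q)

lemma darts_subWalk {s t : W} (w : H.Walk s t) :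
    (subWalk f p w).darts = w.darts.flatMap fun d => (p d.fst d.snd d.adj).darts := by
  induction w with
  | nil => simp [subWalk]
  | cons h q ih => simp [subWalk, Walk.darts_append, ih, Walk.darts_cons]

lemma edges_subWalk {s t : W} (w : H.Walk s t) :
    (subWalk f p w).edges = w.darts.flatMap fun d => (p d.fst d.snd d.adj).edges := by
  induction w with
  | nil => simp [subWalk]
  | cons h q ih => simp [subWalk, Walk.edges_append, ih]

lemma tail_support_subWalk {s t : W} (w : H.Walk s t) :
    (subWalk f p w).support.tail
      = w.darts.flatMap fun d => (p d.fst d.snd d.adj).support.tail := by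
  induction w with
  | nil => simp [subWalk]
  | cons h q ih =>
    show ((p _ _ h).append (subWalk f p q)).support.tail = _
    rw [Walk.support_append, Walk.support_eq_cons (p _ _ h), List.cons_append,
      List.tail_cons, ih]
    simp

lemma length_subWalk_mod (hodd : ∀ a b (h : H.Adj a b), (p a b h).length % 2 = 1)
    {s t : W} (w : H.Walk s t) :
    (subWalk f p w).length % 2 = w.length % 2 := by
  induction w with
  | nil => simp [subWalk]
  | cons h q ih =>
    show ((p _ _ h).append (subWalk f p q)).length % 2 = _
    rw [Walk.length_append, Walk.length_cons]
    have := hodd _ _ h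
    omega

lemma length_subWalk_le (hodd : ∀ a b (h : H.Adj a b), (p a b h).length % 2 = 1)
    {s t : W} (w : H.Walk s t) :
    w.length ≤ (subWalk f p w).length := by
  induction w with
  | nil => simp [subWalk]
  | cons h q ih =>
    show _ ≤ ((p _ _ h).append (subWalk f p q)).length
    rw [Walk.length_append, Walk.length_cons]
    have := hodd _ _ h
    omega

lemma mem_support_subWalk_iff {s t : W} {x : V} (w : H.Walk s t)
    (hx : x ∈ (subWalk f p w).support) :
    x = f t ∨ ∃ d ∈ w.darts, x ∈ (p d.fst d.snd d.adj).support := by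
  induction w with
  | nil =>
    left
    simpa [subWalk] using hx
  | cons h q ih =>
    rw [show subWalk f p (Walk.cons h q) = (p _ _ h).append (subWalk f p q) from rfl,
      Walk.mem_support_append_iff] at hx
    rcases hx with hx | hx
    · exact Or.inr ⟨_, List.mem_cons_self, hx⟩
    · rcases ih hx with hx | ⟨d, hd, hx⟩
      · exact Or.inl hx
      · exact Or.inr ⟨d, List.mem_cons_of_mem _ hd, hx⟩

lemma mem_support_subWalk_of_mem {s t u : W} (w : H.Walk s t) (hu : u ∈ w.support) :
    f u ∈ (subWalk f p w).support := by
  induction w with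
  | nil =>
    simp only [Walk.support_nil, List.mem_singleton] at hu
    subst hu
    simp [subWalk]
  | cons h q ih =>
    rw [show subWalk f p (Walk.cons h q) = (p _ _ h).append (subWalk f p q) from rfl,
      Walk.mem_support_append_iff]
    rw [Walk.support_cons, List.mem_cons] at hu
    rcases hu with rfl | hu
    · exact Or.inl (Walk.start_mem_support _)
    · exact Or.inr (ih hu)

lemma mem_support_subWalk_of_edge
    (hrev : ∀ u v (h : H.Adj u v), p v u h.symm = (p u v h).reverse)
    {s t a b : W} {x : V} (w : H.Walk s t) (h : H.Adj a b) (he : s(a, b) ∈ w.edges)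
    (hx : x ∈ (p a b h).support) : x ∈ (subWalk f p w).support := by
  induction w with
  | nil => simp at he
  | cons h' q ih =>
    rw [show subWalk f p (Walk.cons h' q) = (p _ _ h').append (subWalk f p q) from rfl,
      Walk.mem_support_append_iff]
    rw [Walk.edges_cons, List.mem_cons] at he
    rcases he with he | he
    · rw [Sym2.eq_iff] at he
      rcases he with ⟨rfl, rfl⟩ | ⟨rfl, rfl⟩
      · exact Or.inl hx
      · left
        have hpp : p _ _ h' = (p a b h).reverse := hrev a b h
        rw [hpp, Walk.support_reverse, List.mem_reverse]
        exact hx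
    · exact Or.inr (ih he)

lemma forwardCount_subWalk_mod (o : GraphOrientation G) (oH : GraphOrientation H)
    (hdir : ∀ a b (h : H.Adj a b), oH.dir a b ↔ Odd (forwardCount o (p a b h)))
    {s t : W} (w : H.Walk s t) :
    forwardCount o (subWalk f p w) % 2 = forwardCount oH w % 2 := by
  classical
  induction w with
  | nil => simp [subWalk, forwardCount]
  | @cons a b t' h q ih =>
    rw [show subWalk f p (Walk.cons h q) = (p _ _ h).append (subWalk f p q) from rfl,
      forwardCount_append]
    have hcount : forwardCount oH (Walk.cons h q)
        = forwardCount oH q + (if oH.dir a b then 1 else 0) := by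
      unfold forwardCount
      rw [Walk.darts_cons, List.countP_cons]
      simp
    rw [hcount]
    by_cases hd : oH.dir a b
    · have h1 : forwardCount o (p a b h) % 2 = 1 := Nat.odd_iff.1 ((hdir a b h).1 hd)
      simp only [hd, if_true]
      omega
    · have h1 : forwardCount o (p a b h) % 2 = 0 := by
        rcases Nat.even_or_odd (forwardCount o (p a b h)) with he | ho
        · exact Nat.even_iff.1 he
        · exact absurd ((hdir a b h).2 ho) hd
      simp only [hd, if_false]
      omega

end SubWalkAux
set_option maxHeartbeats 2000000 in
/-- If a bipartite graph `G` contains a bipartite graph `H` and `G` admits a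
Pfaffian orientation, then so does `H`. -/
theorem pfaffian_of_contains [Fintype V] [Fintype W]
    (G : SimpleGraph V) (H : SimpleGraph W)
    (hGbip : ∃ A B, IsBipartition G A B) (hHbip : ∃ A B, IsBipartition H A B)
    (hcon : Contains G H) (hpf : ∃ o : GraphOrientation G, IsPfaffian G o) :
    ∃ o : GraphOrientation H, IsPfaffian H o := by
  classical
  obtain ⟨f, p, hinj, hpath, hrev, hsup, hdisj, M₀, hM₀m, hM₀v⟩ := hcon
  obtain ⟨o, ho⟩ := hpf
  have hodd : ∀ a b (h : H.Adj a b), (p a b h).length % 2 = 1 :=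
    fun a b h => Nat.odd_iff.1 (hpath a b h).2
  have hpath' : ∀ a b (h : H.Adj a b), (p a b h).IsPath := fun a b h => (hpath a b h).1
  have keyrev : ∀ a b (h : H.Adj a b),
      forwardCount o (p a b h) + forwardCount o (p b a h.symm) = (p a b h).length := by
    intro a b h
    rw [hrev a b h]
    exact forwardCount_add_reverse o _
  set dirH : W → W → Prop :=
    fun a b => ∃ h : H.Adj a b, Odd (forwardCount o (p a b h)) with hdirHdef
  have asymmH : ∀ u v, dirH u v → ¬ dirH v u := by
    rintro u v ⟨h, hu⟩ ⟨h', hv⟩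
    have hh : p v u h' = p v u h.symm := rfl
    rw [hh] at hv
    have hk := keyrev u v h
    have h1 := Nat.odd_iff.1 hu
    have h2 := Nat.odd_iff.1 hv
    have h3 := hodd u v h
    omega
  have adjH : ∀ u v, H.Adj u v ↔ (dirH u v ∨ dirH v u) := by
    intro u v
    constructor
    · intro h
      have hk := keyrev u v h
      have h3 := hodd u v h
      rcases Nat.even_or_odd (forwardCount o (p u v h)) with he | hd
      · refine Or.inr ⟨h.symm, ?_⟩
        have h4 := Nat.even_iff.1 he
        rw [Nat.odd_iff]
        omega
      · exact Or.inl ⟨h, hd⟩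
    · rintro (⟨h, -⟩ | ⟨h, -⟩)
      · exact h
      · exact h.symm
  refine ⟨⟨dirH, asymmH, adjH⟩, ?_⟩
  set oH : GraphOrientation H := ⟨dirH, asymmH, adjH⟩ with hoHdef
  have hdirodd : ∀ a b (h : H.Adj a b), oH.dir a b ↔ Odd (forwardCount o (p a b h)) := by
    intro a b h
    constructor
    · rintro ⟨h', hh⟩
      exact hh
    · intro hh
      exact ⟨h, hh⟩
  intro v c hc hceven hcpm
  obtain ⟨MH, hMHm, hMHv⟩ := hcpm
  set C : G.Walk (f v) (f v) := subWalk f p c with hCdef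
  have hCmod : C.length % 2 = c.length % 2 := length_subWalk_mod f p hodd c
  have hClen : c.length ≤ C.length := length_subWalk_le f p hodd c
  have hclen3 := hc.three_le_length
  -- pairwise facts about the darts of `c`
  have hdedge : c.darts.Pairwise fun d d' : H.Dart => d.edge ≠ d'.edge := by
    have h1 : c.edges.Nodup := hc.edges_nodup
    have h2 : c.edges = c.darts.map SimpleGraph.Dart.edge := rfl
    rw [h2] at h1
    exact List.pairwise_map.1 h1
  have hdsnd : c.darts.Pairwise fun d d' : H.Dart => d.snd ≠ d'.snd := by
    have h1 : (c.darts.map fun d : H.Dart => d.snd).Nodup := by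
      rw [Walk.map_snd_darts]
      exact hc.support_nodup
    exact List.pairwise_map.1 h1
  have hCtrail : C.IsTrail := by
    constructor
    rw [hCdef, edges_subWalk, List.nodup_flatMap]
    refine ⟨fun d _ => (hpath' _ _ d.adj).isTrail.edges_nodup, ?_⟩
    refine hdedge.imp ?_
    intro d d' hne e he1 he2
    revert he1 he2
    induction e using Sym2.ind with
    | _ x y =>
    intro he1 he2
    have hx1 : x ∈ (p d.fst d.snd d.adj).support :=
      Walk.fst_mem_support_of_mem_edges _ he1
    have hy1 : y ∈ (p d.fst d.snd d.adj).support :=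
      Walk.snd_mem_support_of_mem_edges _ he1
    have hx2 : x ∈ (p d'.fst d'.snd d'.adj).support :=
      Walk.fst_mem_support_of_mem_edges _ he2
    have hy2 : y ∈ (p d'.fst d'.snd d'.adj).support :=
      Walk.snd_mem_support_of_mem_edges _ he2
    have hxy : x ≠ y := ((p d.fst d.snd d.adj).adj_of_mem_edges he1).ne
    have h1 := hdisj d.fst d.snd d'.fst d'.snd d.adj d'.adj hne x hx1 hx2
    have h2 := hdisj d.fst d.snd d'.fst d'.snd d.adj d'.adj hne y hy1 hy2
    have hW : ∀ z : V, (z = f d.fst ∨ z = f d.snd) → (z = f d'.fst ∨ z = f d'.snd) →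
        ∃ w : W, z = f w ∧ (w = d.fst ∨ w = d.snd) ∧ (w = d'.fst ∨ w = d'.snd) := by
      rintro z (rfl | rfl) (hz | hz)
      · exact ⟨d.fst, rfl, Or.inl rfl, Or.inl (hinj hz)⟩
      · exact ⟨d.fst, rfl, Or.inl rfl, Or.inr (hinj hz)⟩
      · exact ⟨d.snd, rfl, Or.inr rfl, Or.inl (hinj hz)⟩
      · exact ⟨d.snd, rfl, Or.inr rfl, Or.inr (hinj hz)⟩
    obtain ⟨wx, hwx, hwx1, hwx2⟩ := hW x h1.1 h1.2
    obtain ⟨wy, hwy, hwy1, hwy2⟩ := hW y h2.1 h2.2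
    have hwxy : wx ≠ wy := fun hw => hxy (by rw [hwx, hwy, hw])
    apply hne
    show s(d.fst, d.snd) = s(d'.fst, d'.snd)
    have hnd : d.fst ≠ d.snd := d.adj.ne
    have hnd' : d'.fst ≠ d'.snd := d'.adj.ne
    rw [Sym2.eq_iff]
    rcases hwx1 with rfl | rfl <;> rcases hwy1 with rfl | rfl <;>
      rcases hwx2 with h2a | h2a <;> rcases hwy2 with h2b | h2b <;>
      first
        | exact absurd rfl hwxy
        | exact Or.inl ⟨h2a, h2b⟩
        | exact Or.inl ⟨h2b, h2a⟩
        | exact Or.inr ⟨h2a, h2b⟩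
        | exact Or.inr ⟨h2b, h2a⟩
        | exact absurd (h2a.trans h2b.symm) hnd
        | exact absurd (h2b.trans h2a.symm) hnd
  have hCsupnodup : C.support.tail.Nodup := by
    rw [hCdef, tail_support_subWalk, List.nodup_flatMap]
    refine ⟨fun d _ => (hpath' _ _ d.adj).support_nodup.tail, ?_⟩
    refine (hdedge.and hdsnd).imp ?_
    rintro d d' ⟨hne, hnes⟩ x hx1 hx2
    simp only at hx1 hx2
    have hx1' : x ∈ (p d.fst d.snd d.adj).support := List.mem_of_mem_tail hx1
    have hx2' : x ∈ (p d'.fst d'.snd d'.adj).support := List.mem_of_mem_tail hx2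
    have h1 := hdisj d.fst d.snd d'.fst d'.snd d.adj d'.adj hne x hx1' hx2'
    have hhd : f d.fst ∉ (p d.fst d.snd d.adj).support.tail := by
      have hnod := (hpath' _ _ d.adj).support_nodup
      rw [Walk.support_eq_cons] at hnod
      exact (List.nodup_cons.1 hnod).1
    have hhd' : f d'.fst ∉ (p d'.fst d'.snd d'.adj).support.tail := by
      have hnod := (hpath' _ _ d'.adj).support_nodup
      rw [Walk.support_eq_cons] at hnod
      exact (List.nodup_cons.1 hnod).1
    have hx_s : x = f d.snd := by
      rcases h1.1 with h | h
      · exact absurd (h ▸ hx1) hhd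
      · exact h
    have hx_s' : x = f d'.snd := by
      rcases h1.2 with h | h
      · exact absurd (h ▸ hx2) hhd'
      · exact h
    exact hnes (hinj (hx_s.symm.trans hx_s'))
  have hCne : C ≠ SimpleGraph.Walk.nil := by
    intro hC
    have h0 : C.length = 0 := by rw [hC]; rfl
    omega
  have hCcyc : C.IsCycle := ⟨⟨hCtrail, hCne⟩, hCsupnodup⟩
  have hCeven : Even C.length := by
    rw [Nat.even_iff]
    have h1 := Nat.even_iff.1 hceven
    omega
  have hCPM : HasPMOn G {x | x ∉ C.support} := by
    have hMHfact : ∀ {a b : W}, MH.Adj a b → H.Adj a b ∧ a ∉ c.support ∧ b ∉ c.support := by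
      intro a b hab
      refine ⟨MH.adj_sub hab, ?_, ?_⟩
      · have h1 := MH.edge_vert hab
        rw [hMHv] at h1
        exact h1
      · have h1 := MH.edge_vert hab.symm
        rw [hMHv] at h1
        exact h1
    set mFull : V → V → Prop := fun x y =>
      ∃ a b, ∃ h : H.Adj a b, MH.Adj a b ∧ FullPair (p a b h) x y with hmFulldef
    set mInt : V → V → Prop := fun x y =>
      ∃ a b, ∃ h : H.Adj a b, ¬ MH.Adj a b ∧ s(a, b) ∉ c.edges ∧ IntPair (p a b h) x y
      with hmIntdef
    have hdartmem : ∀ d : H.Dart, d ∈ c.darts → d.fst ∈ c.support ∧ d.snd ∈ c.support :=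
      fun d hd => ⟨c.dart_fst_mem_support_of_mem_darts hd,
        c.dart_snd_mem_support_of_mem_darts hd⟩
    have hM₀no : ∀ x, x ∈ M₀.verts →
        (x ∉ Set.range f) ∧ ∀ a b (h : H.Adj a b), x ∉ (p a b h).support := by
      intro x hx
      rw [hM₀v] at hx
      exact ⟨fun hr => hx (Or.inl hr), fun a b h hm => hx (Or.inr ⟨a, b, h, hm⟩)⟩
    have hM₀offC : ∀ x, x ∈ M₀.verts → x ∉ C.support := by
      intro x hx hxC
      rcases mem_support_subWalk_iff f p c hxC with rfl | ⟨d, hd, hxd⟩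
      · exact (hM₀no _ hx).1 ⟨v, rfl⟩
      · exact (hM₀no _ hx).2 _ _ d.adj hxd
    have hfullOff : ∀ x y, mFull x y → x ∉ C.support := by
      rintro x y ⟨a, b, h, hM, hFP⟩ hxC
      obtain ⟨hH, hac, hbc⟩ := hMHfact hM
      have hxs : x ∈ (p a b h).support := hFP.mem_left
      rcases mem_support_subWalk_iff f p c hxC with rfl | ⟨d, hd, hxd⟩
      · rcases hsup a b h v hxs with rfl | rfl
        · exact hac c.start_mem_support
        · exact hbc c.start_mem_support
      · by_cases he : s(a, b) = s(d.fst, d.snd)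
        · rw [Sym2.eq_iff] at he
          rcases he with ⟨rfl, rfl⟩ | ⟨rfl, rfl⟩
          · exact hac (hdartmem d hd).1
          · exact hac (hdartmem d hd).2
        · have hd2 := hdisj a b d.fst d.snd h d.adj he x hxs hxd
          rcases hd2.1 with rfl | rfl <;> rcases hd2.2 with h2 | h2
          · exact hac (by rw [hinj h2]; exact (hdartmem d hd).1)
          · exact hac (by rw [hinj h2]; exact (hdartmem d hd).2)
          · exact hbc (by rw [hinj h2]; exact (hdartmem d hd).1)
          · exact hbc (by rw [hinj h2]; exact (hdartmem d hd).2)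
    have hintOff : ∀ x y, mInt x y → x ∉ C.support := by
      rintro x y ⟨a, b, h, hnM, hnec, hIP⟩ hxC
      have hxs := hIP.mem_left
      have hends := hIP.ne_ends (hpath' a b h)
      rcases mem_support_subWalk_iff f p c hxC with rfl | ⟨d, hd, hxd⟩
      · rcases hsup a b h v hxs with rfl | rfl
        · exact hends.1 rfl
        · exact hends.2 rfl
      · have hde : d.edge ∈ c.edges := List.mem_map_of_mem hd
        have he : s(a, b) ≠ s(d.fst, d.snd) := fun hh => hnec (by rw [hh]; exact hde)
        have hd2 := hdisj a b d.fst d.snd h d.adj he x hxs hxd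
        rcases hd2.1 with h2 | h2
        · exact hends.1 h2
        · exact hends.2 h2
    have hsameF : ∀ {a b a' b' : W} (h : H.Adj a b) (h' : H.Adj a' b'),
        s(a, b) = s(a', b') → ∀ {x y : V}, FullPair (p a' b' h') x y →
        FullPair (p a b h) x y := by
      intro a b a' b' h h' he x y hxy
      rw [Sym2.eq_iff] at he
      rcases he with ⟨rfl, rfl⟩ | ⟨he1, he2⟩
      · exact hxy
      · subst he1
        subst he2
        have hpp : p b a h' = (p a b h).reverse := hrev a b h
        rw [hpp] at hxy
        exact FullPair.of_reverse (hodd a b h) hxy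
    have hsameI : ∀ {a b a' b' : W} (h : H.Adj a b) (h' : H.Adj a' b'),
        s(a, b) = s(a', b') → ∀ {x y : V}, IntPair (p a' b' h') x y →
        IntPair (p a b h) x y := by
      intro a b a' b' h h' he x y hxy
      rw [Sym2.eq_iff] at he
      rcases he with ⟨rfl, rfl⟩ | ⟨he1, he2⟩
      · exact hxy
      · subst he1
        subst he2
        have hpp : p b a h' = (p a b h).reverse := hrev a b h
        rw [hpp] at hxy
        exact IntPair.of_reverse (hodd a b h) hxy
    have hsameM : ∀ {a b a' b' : W}, s(a, b) = s(a', b') → MH.Adj a b → MH.Adj a' b' := by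
      intro a b a' b' he hM
      rw [Sym2.eq_iff] at he
      rcases he with ⟨rfl, rfl⟩ | ⟨rfl, rfl⟩
      · exact hM
      · exact hM.symm
    have huniq : ∀ x y y', (M₀.Adj x y ∨ mFull x y ∨ mInt x y) →
        (M₀.Adj x y' ∨ mFull x y' ∨ mInt x y') → y = y' := by
      intro x y y' hA hA'
      have hMFcontra : ∀ {z z' : V}, M₀.Adj x z → mFull x z' → False := by
        rintro z z' hM ⟨a, b, h, -, hFP⟩
        exact (hM₀no x (M₀.edge_vert hM)).2 a b h hFP.mem_left
      have hMIcontra : ∀ {z z' : V}, M₀.Adj x z → mInt x z' → False := by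
        rintro z z' hM ⟨a, b, h, -, -, hIP⟩
        exact (hM₀no x (M₀.edge_vert hM)).2 a b h hIP.mem_left
      have hFIcontra : ∀ {z z' : V}, mFull x z → mInt x z' → False := by
        rintro z z' ⟨a, b, h, hM, hFP⟩ ⟨a', b', h', hnM, hnec, hIP⟩
        by_cases he : s(a, b) = s(a', b')
        · exact hnM (hsameM he hM)
        · have hd2 := hdisj a b a' b' h h' he x hFP.mem_left hIP.mem_left
          have hends := hIP.ne_ends (hpath' a' b' h')
          rcases hd2.2 with h2 | h2
          · exact hends.1 h2
          · exact hends.2 h2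
      have hIIuniq : ∀ {z z' : V}, mInt x z → mInt x z' → z = z' := by
        rintro z z' ⟨a, b, h, hnM, hnec, hIP⟩ ⟨a', b', h', hnM', hnec', hIP'⟩
        by_cases he : s(a, b) = s(a', b')
        · exact IntPair.unique (hpath' a b h) hIP (hsameI h h' he hIP')
        · exfalso
          have hd2 := hdisj a b a' b' h h' he x hIP.mem_left hIP'.mem_left
          have hends := hIP.ne_ends (hpath' a b h)
          rcases hd2.1 with h2 | h2
          · exact hends.1 h2
          · exact hends.2 h2
      have hFFuniq : ∀ {z z' : V}, mFull x z → mFull x z' → z = z' := by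
        rintro z z' ⟨a, b, h, hM, hFP⟩ ⟨a', b', h', hM', hFP'⟩
        by_cases he : s(a, b) = s(a', b')
        · exact FullPair.unique (hpath' a b h) hFP (hsameF h h' he hFP')
        · exfalso
          apply he
          have hd2 := hdisj a b a' b' h h' he x hFP.mem_left hFP'.mem_left
          rcases hd2.1 with h2 | h2 <;> rcases hd2.2 with h3 | h3
          · have ha : a = a' := hinj (h2.symm.trans h3)
            have hb : b = b' :=
              (hMHm (MH.edge_vert hM)).unique hM (by rw [ha]; exact hM')
            rw [ha, hb]
          · have ha : a = b' := hinj (h2.symm.trans h3)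
            have hb : b = a' :=
              (hMHm (MH.edge_vert hM)).unique hM (by rw [ha]; exact hM'.symm)
            rw [Sym2.eq_iff]
            exact Or.inr ⟨ha, hb⟩
          · have hb : b = a' := hinj (h2.symm.trans h3)
            have ha : a = b' :=
              (hMHm (MH.edge_vert hM.symm)).unique hM.symm (by rw [hb]; exact hM')
            rw [Sym2.eq_iff]
            exact Or.inr ⟨ha, hb⟩
          · have hb : b = b' := hinj (h2.symm.trans h3)
            have ha : a = a' :=
              (hMHm (MH.edge_vert hM.symm)).unique hM.symm (by rw [hb]; exact hM'.symm)
            rw [ha, hb]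
      rcases hA with h1 | h1 | h1 <;> rcases hA' with h2 | h2 | h2
      · exact (hM₀m (M₀.edge_vert h1)).unique h1 h2
      · exact (hMFcontra h1 h2).elim
      · exact (hMIcontra h1 h2).elim
      · exact (hMFcontra h2 h1).elim
      · exact hFFuniq h1 h2
      · exact (hFIcontra h1 h2).elim
      · exact (hMIcontra h2 h1).elim
      · exact (hFIcontra h2 h1).elim
      · exact hIIuniq h1 h2
    refine ⟨⟨{x | x ∉ C.support},
      fun x y => (M₀.Adj x y ∨ mFull x y ∨ mInt x y) ∧
        x ∉ C.support ∧ y ∉ C.support, ?_, ?_, ?_⟩, ?_, rfl⟩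
    · rintro x y ⟨hA | hA | hA, -, -⟩
      · exact M₀.adj_sub hA
      · obtain ⟨a, b, h, -, hFP⟩ := hA
        exact hFP.adj
      · obtain ⟨a, b, h, -, -, hIP⟩ := hA
        exact hIP.adj
    · rintro x y ⟨-, hx, -⟩
      exact hx
    · refine ⟨?_⟩; rintro x y ⟨hA | hA | hA, hx, hy⟩
      · exact ⟨Or.inl hA.symm, hy, hx⟩
      · obtain ⟨a, b, h, hM, hFP⟩ := hA
        exact ⟨Or.inr (Or.inl ⟨a, b, h, hM, hFP.symm⟩), hy, hx⟩
      · obtain ⟨a, b, h, hM, hne, hIP⟩ := hA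
        exact ⟨Or.inr (Or.inr ⟨a, b, h, hM, hne, hIP.symm⟩), hy, hx⟩
    · rintro x hx
      simp only [Set.mem_setOf_eq] at hx
      by_cases hxM : x ∈ M₀.verts
      · obtain ⟨y, hy, -⟩ := hM₀m hxM
        refine ⟨y, ⟨Or.inl hy, hx, hM₀offC y (M₀.edge_vert hy.symm)⟩, ?_⟩
        rintro y' ⟨hA', -, -⟩
        exact huniq x y' y hA' (Or.inl hy)
      · by_cases hx0 : x ∈ Set.range f
        · obtain ⟨w, rfl⟩ := hx0
          have hwc : w ∉ c.support := fun hw => hx (mem_support_subWalk_of_mem f p c hw)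
          have hwM : w ∈ MH.verts := by rw [hMHv]; exact hwc
          obtain ⟨m, hm, -⟩ := hMHm hwM
          have hH : H.Adj w m := MH.adj_sub hm
          obtain ⟨y, hy⟩ := FullPair.exists_of (w := p w m hH) (hodd w m hH) (i := 0)
            (Nat.zero_le _)
          rw [Walk.getVert_zero] at hy
          have hAy : mFull (f w) y := ⟨w, m, hH, hm, hy⟩
          refine ⟨y, ⟨Or.inr (Or.inl hAy), hx, hfullOff y (f w) ⟨w, m, hH, hm, hy.symm⟩⟩, ?_⟩
          rintro y' ⟨hA', -, -⟩
          exact huniq (f w) y' y hA' (Or.inr (Or.inl hAy))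
        · have hx1 : ∃ a b, ∃ h : H.Adj a b, x ∈ (p a b h).support := by
            have hxK : x ∈ Set.range f ∪
                {x | ∃ u v, ∃ h : H.Adj u v, x ∈ (p u v h).support} := by
              by_contra hxK
              exact hxM (by rw [hM₀v]; exact hxK)
            rcases hxK with hK | hK
            · exact absurd hK hx0
            · exact hK
          obtain ⟨a, b, h, hxs⟩ := hx1
          obtain ⟨i, hgv, hiL⟩ := Walk.mem_support_iff_exists_getVert.1 hxs
          have hec : s(a, b) ∉ c.edges := fun he =>
            hx (mem_support_subWalk_of_edge f p hrev c h he hxs)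
          by_cases hMab : MH.Adj a b
          · obtain ⟨y, hy⟩ := FullPair.exists_of (hodd a b h) hiL
            rw [hgv] at hy
            have hAy : mFull x y := ⟨a, b, h, hMab, hy⟩
            refine ⟨y, ⟨Or.inr (Or.inl hAy), hx,
              hfullOff y x ⟨a, b, h, hMab, hy.symm⟩⟩, ?_⟩
            rintro y' ⟨hA', -, -⟩
            exact huniq x y' y hA' (Or.inr (Or.inl hAy))
          · have hi0 : 0 < i := by
              rcases Nat.eq_zero_or_pos i with rfl | hpos
              · rw [Walk.getVert_zero] at hgv
                exact absurd ⟨a, hgv⟩ hx0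
              · exact hpos
            have hiL' : i < (p a b h).length := by
              rcases lt_or_eq_of_le hiL with hlt | heq
              · exact hlt
              · rw [heq, Walk.getVert_length] at hgv
                exact absurd ⟨b, hgv⟩ hx0
            obtain ⟨y, hy⟩ := IntPair.exists_of (hodd a b h) hi0 hiL'
            rw [hgv] at hy
            have hAy : mInt x y := ⟨a, b, h, hMab, hec, hy⟩
            refine ⟨y, ⟨Or.inr (Or.inr hAy), hx,
              hintOff y x ⟨a, b, h, hMab, hec, hy.symm⟩⟩, ?_⟩
            rintro y' ⟨hA', -, -⟩
            exact huniq x y' y hA' (Or.inr (Or.inr hAy))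
  have hoddC := ho (f v) C hCcyc hCeven hCPM
  have hmod : forwardCount o C % 2 = forwardCount oH c % 2 :=
    forwardCount_subWalk_mod f p o oH hdirodd c
  rw [Nat.odd_iff] at hoddC ⊢
  omega
end

section
/- Let M be a matching in a bipartite graph G, and let u, v be vertices of G. If there exists an M-alternating walk in G with ends u and v, then there exists an M-alternating path in G with ends u and v. -/
open SimpleGraph

universe u v

variable {V : Type u} {W : Type v}

/-- Auxiliary: flip a boolean `n` times. -/
def flipN (n : ℕ) (b : Bool) : Bool := if Even n then b else !b

lemma flipN_succ (n : ℕ) (b : Bool) : flipN (n + 1) b = flipN n (!b) := by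
  by_cases h : Even n <;> simp [flipN, Nat.even_add_one, h]

/-- Auxiliary: a list of edges alternates (w.r.t. `M`), starting with
membership status `b`. -/
def AltList {G : SimpleGraph V} (M : G.Subgraph) : Bool → List (Sym2 V) → Prop
  | _, [] => True
  | b, e :: l => (e ∈ M.edgeSet ↔ b = true) ∧ AltList M (!b) l

lemma altList_get {G : SimpleGraph V} (M : G.Subgraph) :
    ∀ (l : List (Sym2 V)) (b : Bool), AltList M b l ↔
      ∀ (i : ℕ) (h : i < l.length), (l.get ⟨i, h⟩ ∈ M.edgeSet ↔ flipN i b = true) := by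
  intro l
  induction l with
  | nil => intro b; simp [AltList]
  | cons e l ih =>
    intro b
    constructor
    · rintro ⟨h1, h2⟩ i hi
      match i with
      | 0 => simpa [flipN] using h1
      | (j + 1) =>
        rw [flipN_succ]
        exact (ih (!b)).mp h2 j (by simpa using hi)
    · intro h
      refine ⟨by simpa [flipN] using h 0 (by simp), (ih (!b)).mpr ?_⟩
      intro j hj
      rw [← flipN_succ]
      exact h (j + 1) (by simpa using hj)

lemma altList_append {G : SimpleGraph V} (M : G.Subgraph) :
    ∀ (l1 l2 : List (Sym2 V)) (b : Bool), AltList M b (l1 ++ l2) →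
      AltList M (flipN l1.length b) l2 := by
  intro l1
  induction l1 with
  | nil => intro l2 b h; simpa [flipN] using h
  | cons e l ih =>
    rintro l2 b ⟨_, h2⟩
    have := ih l2 (!b) h2
    simpa [flipN_succ] using this

/-- If there is an `M`-alternating walk with ends `u` and `v`, then there is
an `M`-alternating path with ends `u` and `v`. -/
theorem altWalk_to_altPath [Fintype V] (G : SimpleGraph V) (A B : Set V)
    (hbip : IsBipartition G A B) (M : G.Subgraph) (hM : M.IsMatching)
    (u v : V) (h : ∃ w : G.Walk u v, IsAltWalk M w) :
    ∃ p : G.Walk u v, p.IsPath ∧ IsAltWalk M p := by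
  classical
  obtain ⟨w, hw⟩ := h
  -- translate `IsAltWalk` to `AltList`
  have hiff : ∀ {x y : V} (q : G.Walk x y),
      IsAltWalk M q ↔ (AltList M true q.edges ∨ AltList M false q.edges) := by
    intro x y q
    unfold IsAltWalk
    rw [altList_get, altList_get]
    constructor
    · rintro (h | h)
      · left; intro i hi
        rw [h i hi]
        by_cases he : Even i <;> simp [flipN, he]
      · right; intro i hi
        rw [h i hi]
        by_cases he : Even i <;> simp [flipN, he, ← Nat.not_even_iff_odd]
    · rintro (h | h)
      · left; intro i hi
        rw [h i hi]
        by_cases he : Even i <;> simp [flipN, he]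
      · right; intro i hi
        rw [h i hi]
        by_cases he : Even i <;> simp [flipN, he, ← Nat.not_even_iff_odd]
  -- bipartite parity facts
  have hmemB : ∀ x : V, x ∈ B ↔ x ∉ A := by
    intro x
    constructor
    · intro hx hxA
      exact hbip.1.le_bot ⟨hxA, hx⟩
    · intro hx
      have : x ∈ A ∪ B := hbip.2.1 ▸ Set.mem_univ x
      exact this.resolve_left hx
  have hstep : ∀ {x z : V}, G.Adj x z → (x ∈ A ↔ z ∉ A) := by
    intro x z hxz
    rcases hbip.2.2 hxz with ⟨hx, hz⟩ | ⟨hx, hz⟩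
    · simp [hx, (hmemB z).mp hz]
    · have hxA : x ∉ A := (hmemB x).mp hx
      simp [hxA, hz]
  have hpar : ∀ {x y : V} (q : G.Walk x y), ((x ∈ A ↔ y ∈ A) ↔ Even q.length) := by
    intro x y q
    induction q with
    | nil => simp
    | @cons x z y hxz p ih =>
      have h1 := hstep hxz
      rw [SimpleGraph.Walk.length_cons, Nat.even_add_one, ← ih]
      tauto
  -- bypass preserves alternation
  have hbyp : ∀ {x y : V} (q : G.Walk x y) (b : Bool),
      AltList M b q.edges → AltList M b q.bypass.edges := by
    intro x y q
    induction q with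
    | nil => intro b hb; exact hb
    | @cons x z y hxz p ih =>
      intro b hb
      obtain ⟨h1, h2⟩ := hb
      rw [SimpleGraph.Walk.bypass]
      split_ifs with hs
      · -- drop until x in p.bypass
        have hih := ih (!b) h2
        have hspec := SimpleGraph.Walk.take_spec p.bypass hs
        rw [← hspec, SimpleGraph.Walk.edges_append] at hih
        have := altList_append M _ _ (!b) hih
        have hlen : ¬ Even (p.bypass.takeUntil x hs).length := by
          have := hpar (p.bypass.takeUntil x hs)
          have hx := hstep hxz
          tauto
        rw [SimpleGraph.Walk.length_edges] at this
        simpa [flipN, hlen] using this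
      · exact ⟨h1, ih (!b) h2⟩
  rw [hiff] at hw
  rcases hw with hw | hw
  · exact ⟨w.bypass, w.bypass_isPath, (hiff _).mpr (Or.inl (hbyp w true hw))⟩
  · exact ⟨w.bypass, w.bypass_isPath, (hiff _).mpr (Or.inr (hbyp w false hw))⟩
end

section
/- Let G be a connected brace, and let X be a set of vertices of G such that |N_G(X)| ≤ 3 and V(G) − X − N_G(X) contains vertices of both color classes of G. Then |X| ≤ 1. -/
open SimpleGraph

universe u v

variable {V : Type u} {W : Type v}

lemma walk_cross' {G : SimpleGraph V} {K : Set V} {u v : V} (w : G.Walk u v)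
    (hu : u ∉ K) (hv : v ∈ K) : ∃ x y, G.Adj x y ∧ x ∉ K ∧ y ∈ K := by
  induction w with
  | nil => exact absurd hv hu
  | @cons a b c h p ih =>
    by_cases hb : b ∈ K
    · exact ⟨a, b, h, hu, hb⟩
    · exact ih hb hv

lemma partner_card' {G : SimpleGraph V} [Fintype V] {P : G.Subgraph} (hP : P.IsPerfectMatching)
    (S F : Set V) (hF : ∀ s ∈ S, ∀ w, P.Adj s w → w ∈ F) : S.ncard ≤ F.ncard := by
  classical
  have hex : ∀ x : V, ∃ w, P.Adj x w ∧ ∀ y, P.Adj x y → y = w := fun x => hP.1 (hP.2 x)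
  choose f hf hu using hex
  have hinj : Set.InjOn f S := by
    intro x hx y hy hxy
    have ex : x = f (f x) := hu (f x) x (hf x).symm
    have ey : y = f (f x) := hu (f x) y (hxy ▸ (hf y).symm)
    rw [ex, ey]
  calc S.ncard = (f '' S).ncard := (Set.ncard_image_of_injOn hinj).symm
    _ ≤ F.ncard := Set.ncard_le_ncard
        (by rintro _ ⟨s, hs, rfl⟩; exact hF s hs _ (hf s)) (Set.toFinite F)

lemma cross_to_nbd' {G : SimpleGraph V} (hconn : G.Connected) {S : Set V}
    (hS : S.Nonempty) {b₀ : V} (h1 : b₀ ∉ S) (h2 : b₀ ∉ nbdSet G S) :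
    ∃ a n, G.Adj a n ∧ a ∉ S ∧ a ∉ nbdSet G S ∧ n ∈ nbdSet G S := by
  obtain ⟨s, hs⟩ := hS
  obtain ⟨w⟩ := hconn b₀ s
  obtain ⟨x, y, hadj, hx, hy⟩ := walk_cross' (K := S ∪ nbdSet G S) w
    (fun hc => hc.elim h1 h2) (Or.inl hs)
  have hxS : x ∉ S := fun h => hx (Or.inl h)
  have hxN : x ∉ nbdSet G S := fun h => hx (Or.inr h)
  cases hy with
  | inl h => exact absurd ⟨hxS, y, h, hadj.symm⟩ hxN
  | inr h => exact ⟨x, y, hadj, hxS, hxN, h⟩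

lemma brace_step1 {G : SimpleGraph V} [Fintype V] {A B : Set V} (hbip : IsBipartition G A B)
    (hext : KExtendable G 2) (hconn : G.Connected) {S : Set V} (hSA : S ⊆ A)
    (hS : S.Nonempty) {b₀ : V} (hb1 : b₀ ∉ S) (hb2 : b₀ ∉ nbdSet G S) :
    S.ncard + 1 ≤ (nbdSet G S).ncard := by
  classical
  obtain ⟨a, n, hadj, haS, haN, hnN⟩ := cross_to_nbd' hconn hS hb1 hb2
  obtain ⟨P, hMP, hP⟩ := hext (G.subgraphOfAdj hadj)
    (Subgraph.IsMatching.subgraphOfAdj hadj)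
    (by rw [edgeSet_subgraphOfAdj]; simp)
  have hPan : P.Adj a n := hMP.2 (by simp)
  have key : S.ncard ≤ (nbdSet G S \ {n}).ncard := by
    apply partner_card' hP
    intro s hs w hw
    have hGsw : G.Adj s w := P.adj_sub hw
    have hsA : s ∈ A := hSA hs
    have hwB : w ∈ B := by
      rcases hbip.2.2 hGsw with ⟨_, h⟩ | ⟨h, _⟩
      · exact h
      · exact absurd hsA (Set.disjoint_right.mp hbip.1 h)
    have hwS : w ∉ S := fun hc => Set.disjoint_left.mp hbip.1 (hSA hc) hwB
    refine ⟨⟨hwS, s, hs, hGsw⟩, ?_⟩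
    intro hc
    rw [Set.mem_singleton_iff] at hc
    subst hc
    have : a = s := (hP.1 (hP.2 w)).unique hPan.symm hw.symm
    exact haS (this ▸ hs)
  have hd : (nbdSet G S \ {n}).ncard = (nbdSet G S).ncard - 1 :=
    Set.ncard_diff_singleton_of_mem hnN
  have hpos : 0 < (nbdSet G S).ncard := (Set.ncard_pos (Set.toFinite _)).mpr ⟨n, hnN⟩
  omega

lemma brace_hall2 {G : SimpleGraph V} [Fintype V] {A B : Set V} (hbip : IsBipartition G A B)
    (hext : KExtendable G 2) (hconn : G.Connected) {S : Set V} (hSA : S ⊆ A)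
    (hS : S.Nonempty) {b₀ : V} (hb0B : b₀ ∈ B) (hb1 : b₀ ∉ S) (hb2 : b₀ ∉ nbdSet G S) :
    S.ncard + 2 ≤ (nbdSet G S).ncard := by
  classical
  set N := nbdSet G S with hNdef
  have h1 := brace_step1 hbip hext hconn hSA hS hb1 hb2
  rw [← hNdef] at h1
  by_contra hlt
  have hcard : N.ncard = S.ncard + 1 := by omega
  have hSpos : 0 < S.ncard := (Set.ncard_pos (Set.toFinite _)).mpr hS
  have hNB : N ⊆ B := by
    rintro v ⟨hvS, x, hx, hxv⟩
    rcases hbip.2.2 hxv with ⟨_, h⟩ | ⟨h, _⟩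
    · exact h
    · exact absurd (hSA hx) (Set.disjoint_right.mp hbip.1 h)
  set E : V → V → Prop := fun x y => G.Adj x y ∧ x ∉ S ∧ x ∉ N ∧ y ∈ N with hEdef
  obtain ⟨a, n, hEadj, hEaS, hEaN, hEnN⟩ := cross_to_nbd' hconn hS hb1 hb2
  have hEan : E a n := ⟨hEadj, hEaS, hEaN, hEnN⟩
  -- w ∈ N for any partner of s ∈ S
  have hpart : ∀ (P : G.Subgraph), ∀ s ∈ S, ∀ w, P ≤ (⊤ : G.Subgraph) → P.Adj s w → w ∈ N := by
    intro P s hs w _ hw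
    have hGsw : G.Adj s w := P.adj_sub hw
    have hwB : w ∈ B := by
      rcases hbip.2.2 hGsw with ⟨_, h⟩ | ⟨h, _⟩
      · exact h
      · exact absurd (hSA hs) (Set.disjoint_right.mp hbip.1 h)
    exact ⟨fun hc => Set.disjoint_left.mp hbip.1 (hSA hc) hwB, s, hs, hGsw⟩
  have contra : ∀ (P : G.Subgraph), P.IsPerfectMatching →
      ∀ m₁ m₂ : V, m₁ ∈ N → m₂ ∈ N → m₁ ≠ m₂ →
      (∀ s ∈ S, ¬ P.Adj m₁ s) → (∀ s ∈ S, ¬ P.Adj m₂ s) → False := by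
    intro P hP m₁ m₂ hm₁ hm₂ hne hns₁ hns₂
    have key : S.ncard ≤ (N \ {m₁, m₂}).ncard := by
      apply partner_card' hP
      intro s hs w hw
      refine ⟨hpart P s hs w le_top hw, ?_⟩
      intro hc
      rcases hc with rfl | hc
      · exact hns₁ s hs hw.symm
      · rw [Set.mem_singleton_iff] at hc; subst hc; exact hns₂ s hs hw.symm
    have hsub : ({m₁, m₂} : Set V) ⊆ N := by
      rintro x (rfl | hx)
      · exact hm₁
      · rw [Set.mem_singleton_iff] at hx; subst hx; exact hm₂
    have hdc : (N \ {m₁, m₂}).ncard = N.ncard - ({m₁, m₂} : Set V).ncard :=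
      Set.ncard_diff hsub (Set.toFinite _)
    have hp2 : ({m₁, m₂} : Set V).ncard = 2 := Set.ncard_pair hne
    omega
  have hnomatch : ∀ (P : G.Subgraph), P.IsPerfectMatching → ∀ {x y : V}, P.Adj x y → x ∉ S →
      ∀ s ∈ S, ¬ P.Adj y s := by
    intro P hP x y hxy hx s hs hc
    have hxs : x = s := (hP.1 (hP.2 y)).unique hxy.symm hc
    exact hx (hxs ▸ hs)
  have missed : ∀ (P : G.Subgraph), P.IsPerfectMatching →
      ∃ m x, m ∈ N ∧ P.Adj m x ∧ x ∉ S ∧ x ∉ N := by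
    intro P hP
    have hex : ∀ x : V, ∃ w, P.Adj x w ∧ ∀ y, P.Adj x y → y = w := fun x => hP.1 (hP.2 x)
    choose f hf hu using hex
    have hinj : Set.InjOn f S := by
      intro x hx y hy hxy
      have ex : x = f (f x) := hu (f x) x (hf x).symm
      have ey : y = f (f x) := hu (f x) y (hxy ▸ (hf y).symm)
      rw [ex, ey]
    have himg : f '' S ⊆ N := by
      rintro _ ⟨s, hs, rfl⟩
      exact hpart P s hs (f s) le_top (hf s)
    have hltc : (f '' S).ncard < N.ncard := by
      rw [Set.ncard_image_of_injOn hinj]; omega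
    obtain ⟨m, hmN, hmI⟩ : ∃ m, m ∈ N ∧ m ∉ f '' S := by
      by_contra hc
      push_neg at hc
      have := Set.ncard_le_ncard (fun x hx => hc x hx) (Set.toFinite (f '' S))
      omega
    have hmB : m ∈ B := hNB hmN
    have hfmA : f m ∈ A := by
      rcases hbip.2.2 (P.adj_sub (hf m)) with ⟨h, _⟩ | ⟨_, h⟩
      · exact absurd hmB (Set.disjoint_left.mp hbip.1 h)
      · exact h
    refine ⟨m, f m, hmN, hf m, ?_, ?_⟩
    · intro hc
      exact hmI ⟨f m, hc, (hu (f m) m (hf m).symm).symm⟩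
    · exact fun hc => Set.disjoint_left.mp hbip.1 hfmA (hNB hc)
  by_cases hdis : ∃ a₁ n₁ a₂ n₂, E a₁ n₁ ∧ E a₂ n₂ ∧ a₁ ≠ a₂ ∧ n₁ ≠ n₂
  · obtain ⟨a₁, n₁, a₂, n₂, h₁, h₂, hna, hnn⟩ := hdis
    have hd : Disjoint (G.subgraphOfAdj h₁.1).support (G.subgraphOfAdj h₂.1).support := by
      rw [(Subgraph.IsMatching.subgraphOfAdj h₁.1).support_eq_verts,
        (Subgraph.IsMatching.subgraphOfAdj h₂.1).support_eq_verts,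
        Set.disjoint_left]
      rintro x hx hx'
      simp only [subgraphOfAdj_verts, Set.mem_insert_iff, Set.mem_singleton_iff] at hx hx'
      rcases hx with rfl | rfl <;> rcases hx' with rfl | rfl
      · exact hna rfl
      · exact h₁.2.2.1 h₂.2.2.2
      · exact h₂.2.2.1 h₁.2.2.2
      · exact hnn rfl
    obtain ⟨P, hMP, hP⟩ := hext (G.subgraphOfAdj h₁.1 ⊔ G.subgraphOfAdj h₂.1)
      ((Subgraph.IsMatching.subgraphOfAdj h₁.1).sup
        (Subgraph.IsMatching.subgraphOfAdj h₂.1) hd)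
      (by
        rw [Subgraph.edgeSet_sup, edgeSet_subgraphOfAdj, edgeSet_subgraphOfAdj]
        exact le_trans (Set.ncard_union_le _ _) (by simp))
    have hP1 : P.Adj a₁ n₁ := hMP.2 (Or.inl (by simp))
    have hP2 : P.Adj a₂ n₂ := hMP.2 (Or.inr (by simp))
    exact contra P hP n₁ n₂ h₁.2.2.2 h₂.2.2.2 hnn
      (hnomatch P hP hP1 h₁.2.1) (hnomatch P hP hP2 h₂.2.1)
  · push_neg at hdis
    have hdic : (∀ x y, E x y → x = a) ∨ (∀ x y, E x y → y = n) := by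
      by_cases hx : ∀ x y, E x y → x = a
      · exact Or.inl hx
      · push_neg at hx
        obtain ⟨x', y', hE', hxa⟩ := hx
        have hy'n : y' = n := (hdis a n x' y' hEan hE' (Ne.symm hxa)).symm
        subst hy'n
        refine Or.inr (fun x y hE => ?_)
        by_cases hxeq : x = a
        · exact hdis x y x' y' hE hE' (fun hc => hxa (hc.symm.trans hxeq))
        · exact hdis x y a y' hE hEan hxeq
    rcases hdic with hAll | hAlln
    · -- all crossing edges through a
      have haA : a ∈ A := by
        rcases hbip.2.2 hEadj with ⟨h, _⟩ | ⟨_, h⟩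
        · exact h
        · exact absurd (hNB hEnN) (Set.disjoint_left.mp hbip.1 h)
      by_cases ht : ∃ t, G.Adj a t ∧ t ∉ N
      · obtain ⟨t, hat, htN⟩ := ht
        obtain ⟨P, hMP, hP⟩ := hext (G.subgraphOfAdj hat)
          (Subgraph.IsMatching.subgraphOfAdj hat)
          (by rw [edgeSet_subgraphOfAdj]; simp)
        have hPat : P.Adj a t := hMP.2 (by simp)
        obtain ⟨m, x, hmN, hPmx, hxS, hxN⟩ := missed P hP
        have hxa : x = a := hAll x m ⟨P.adj_sub hPmx.symm, hxS, hxN, hmN⟩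
        rw [hxa] at hPmx
        have hmt : m = t := (hP.1 (hP.2 a)).unique hPmx.symm hPat
        exact htN (hmt ▸ hmN)
      · push_neg at ht
        have hsub : nbdSet G (insert a S) ⊆ N := by
          rintro v ⟨hv, x, hx, hxv⟩
          rcases hx with rfl | hx
          · exact ht v hxv
          · exact ⟨fun hvS => hv (Set.mem_insert_of_mem _ hvS), x, hx, hxv⟩
        have hb1' : b₀ ∉ insert a S := by
          rintro (rfl | hc)
          · exact Set.disjoint_left.mp hbip.1 haA hb0B
          · exact hb1 hc
        have h1' := brace_step1 hbip hext hconn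
          (fun x hx => by rcases hx with rfl | hx; exacts [haA, hSA hx])
          ⟨a, Set.mem_insert _ _⟩ hb1' (fun hc => hb2 (hsub hc))
        have hic : (insert a S).ncard = S.ncard + 1 :=
          Set.ncard_insert_of_notMem hEaS (Set.toFinite S)
        have hle := Set.ncard_le_ncard hsub (Set.toFinite N)
        omega
    · -- all crossing edges through n
      obtain ⟨hnS, s, hsS, hsn⟩ := hEnN
      obtain ⟨P, hMP, hP⟩ := hext (G.subgraphOfAdj hsn)
        (Subgraph.IsMatching.subgraphOfAdj hsn)
        (by rw [edgeSet_subgraphOfAdj]; simp)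
      have hPsn : P.Adj s n := hMP.2 (by simp)
      obtain ⟨m, x, hmN, hPmx, hxS, hxN⟩ := missed P hP
      have hmn : m = n := hAlln x m ⟨P.adj_sub hPmx.symm, hxS, hxN, hmN⟩
      subst hmn
      have hxs : x = s := (hP.1 (hP.2 m)).unique hPmx hPsn.symm
      exact hxS (hxs ▸ hsS)

lemma bip_symm' {G : SimpleGraph V} {A B : Set V} (h : IsBipartition G A B) :
    IsBipartition G B A :=
  ⟨h.1.symm, by rw [Set.union_comm]; exact h.2.1, fun u v huv => (h.2.2 huv).symm⟩


/-- In a connected brace, a vertex set with at most three outside neighbors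
whose removal (together with its neighborhood) leaves vertices of both color
classes has at most one element. -/
theorem small_nbd_singleton [Fintype V] (G : SimpleGraph V) (A B : Set V)
    (hbip : IsBipartition G A B) (hext : KExtendable G 2) (hconn : G.Connected)
    (X : Set V) (hN : (nbdSet G X).ncard ≤ 3)
    (hA : (((Set.univ \ X) \ nbdSet G X) ∩ A).Nonempty)
    (hB : (((Set.univ \ X) \ nbdSet G X) ∩ B).Nonempty) :
    X.ncard ≤ 1 := by
  classical
  obtain ⟨a₀, ⟨⟨_, ha0X⟩, ha0N⟩, ha0A⟩ := hA
  obtain ⟨b₀, ⟨⟨_, hb0X⟩, hb0N⟩, hb0B⟩ := hB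
  have hdisj := hbip.1
  have hsubA : nbdSet G (X ∩ A) ⊆ (X ∩ B) ∪ (nbdSet G X ∩ B) := by
    rintro v ⟨hvXA, x, ⟨hxX, hxA⟩, hxv⟩
    have hvB : v ∈ B := by
      rcases hbip.2.2 hxv with ⟨_, h⟩ | ⟨h, _⟩
      · exact h
      · exact absurd hxA (Set.disjoint_right.mp hdisj h)
    by_cases hvX : v ∈ X
    · exact Or.inl ⟨hvX, hvB⟩
    · exact Or.inr ⟨⟨hvX, x, hxX, hxv⟩, hvB⟩
  have hsubB : nbdSet G (X ∩ B) ⊆ (X ∩ A) ∪ (nbdSet G X ∩ A) := by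
    rintro v ⟨hvXB, x, ⟨hxX, hxB⟩, hxv⟩
    have hvA : v ∈ A := by
      rcases hbip.2.2 hxv with ⟨h, _⟩ | ⟨_, h⟩
      · exact absurd hxB (Set.disjoint_left.mp hdisj h)
      · exact h
    by_cases hvX : v ∈ X
    · exact Or.inl ⟨hvX, hvA⟩
    · exact Or.inr ⟨⟨hvX, x, hxX, hxv⟩, hvA⟩
  have hXsplit : (X ∩ A).ncard + (X ∩ B).ncard = X.ncard := by
    rw [← Set.ncard_union_eq (hdisj.mono Set.inter_subset_right Set.inter_subset_right)
      (Set.toFinite _) (Set.toFinite _), ← Set.inter_union_distrib_left, hbip.2.1,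
      Set.inter_univ]
  have hNsplit : (nbdSet G X ∩ A).ncard + (nbdSet G X ∩ B).ncard = (nbdSet G X).ncard := by
    rw [← Set.ncard_union_eq (hdisj.mono Set.inter_subset_right Set.inter_subset_right)
      (Set.toFinite _) (Set.toFinite _), ← Set.inter_union_distrib_left, hbip.2.1,
      Set.inter_univ]
  have hallA : (X ∩ A).Nonempty →
      (X ∩ A).ncard + 2 ≤ (X ∩ B).ncard + (nbdSet G X ∩ B).ncard := by
    intro hne
    have h2 := brace_hall2 hbip hext hconn Set.inter_subset_right hne hb0B
      (fun hc => hb0X hc.1) (fun hc => (hsubA hc).elim (fun h => hb0X h.1) (fun h => hb0N h.1))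
    calc (X ∩ A).ncard + 2 ≤ (nbdSet G (X ∩ A)).ncard := h2
      _ ≤ ((X ∩ B) ∪ (nbdSet G X ∩ B)).ncard := Set.ncard_le_ncard hsubA (Set.toFinite _)
      _ ≤ _ := Set.ncard_union_le _ _
  have hallB : (X ∩ B).Nonempty →
      (X ∩ B).ncard + 2 ≤ (X ∩ A).ncard + (nbdSet G X ∩ A).ncard := by
    intro hne
    have h2 := brace_hall2 (bip_symm' hbip) hext hconn Set.inter_subset_right hne ha0A
      (fun hc => ha0X hc.1) (fun hc => (hsubB hc).elim (fun h => ha0X h.1) (fun h => ha0N h.1))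
    calc (X ∩ B).ncard + 2 ≤ (nbdSet G (X ∩ B)).ncard := h2
      _ ≤ ((X ∩ A) ∪ (nbdSet G X ∩ A)).ncard := Set.ncard_le_ncard hsubB (Set.toFinite _)
      _ ≤ _ := Set.ncard_union_le _ _
  rcases Set.eq_empty_or_nonempty (X ∩ A) with hA0 | hAne
  · rcases Set.eq_empty_or_nonempty (X ∩ B) with hB0 | hBne
    · have hz1 : (X ∩ A).ncard = 0 := by rw [hA0]; simp
      have hz2 : (X ∩ B).ncard = 0 := by rw [hB0]; simp
      omega
    · have h2 := hallB hBne
      have hz : (X ∩ A).ncard = 0 := by rw [hA0]; simp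
      omega
  · rcases Set.eq_empty_or_nonempty (X ∩ B) with hB0 | hBne
    · have h2 := hallA hAne
      have hz : (X ∩ B).ncard = 0 := by rw [hB0]; simp
      omega
    · have h2 := hallA hAne
      have h3 := hallB hBne
      omega
end

section
/- Let G be a brace that has a Pfaffian orientation. Then G has no subgraph isomorphic to K_{2,3}. -/
open SimpleGraph

universe u v

variable {V : Type u} {W : Type v}

open scoped Classical in
private theorem sq_cycle_aux {G : SimpleGraph V} {a b c d : V}
    (hab : G.Adj a b) (hbc : G.Adj b c) (hcd : G.Adj c d) (hda : G.Adj d a)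
    (hac : a ≠ c) (hbd : b ≠ d) :
    (Walk.cons hab (Walk.cons hbc (Walk.cons hcd (Walk.cons hda Walk.nil)))).IsCycle := by
  have h1 := hab.ne; have h2 := hbc.ne; have h3 := hcd.ne; have h4 := hda.ne
  constructor
  · constructor
    · constructor
      simp [Walk.edges, Sym2.eq, Sym2.rel_iff']
      aesop
    · simp
  · simp [Walk.support]
    aesop

private theorem central_sq {G : SimpleGraph V} (hext : KExtendable G 2) {a b c d : V}
    (hab : G.Adj a b) (hcd : G.Adj c d)
    (hac : a ≠ c) (had : a ≠ d) (hbc : b ≠ c) (hbd : b ≠ d) :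
    HasPMOn G (({a, b, c, d} : Set V)ᶜ) := by
  have h1 := hab.ne; have h3 := hcd.ne
  set M0 : G.Subgraph := G.subgraphOfAdj hab ⊔ G.subgraphOfAdj hcd with hM0
  have hm1 := Subgraph.IsMatching.subgraphOfAdj hab
  have hm2 := Subgraph.IsMatching.subgraphOfAdj hcd
  have hM0m : M0.IsMatching := by
    apply hm1.sup hm2
    rw [hm1.support_eq_verts, hm2.support_eq_verts]
    simp only [subgraphOfAdj_verts]
    rw [Set.disjoint_iff]
    intro x hx
    simp at hx
    rcases hx with ⟨h | h, h' | h'⟩ <;> subst h <;> simp_all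
  have hcard : M0.edgeSet.ncard ≤ 2 := by
    rw [hM0, Subgraph.edgeSet_sup, edgeSet_subgraphOfAdj, edgeSet_subgraphOfAdj]
    exact le_trans (Set.ncard_union_le _ _) (by simp)
  obtain ⟨P, hle, hP⟩ := hext M0 hM0m hcard
  have hPadj_ab : P.Adj a b := hle.2 (by simp [hM0])
  have hPadj_cd : P.Adj c d := hle.2 (by simp [hM0])
  refine ⟨P.deleteVerts {a, b, c, d}, ?_, ?_⟩
  · intro v hv
    simp only [Subgraph.deleteVerts_verts, Set.mem_diff] at hv
    obtain ⟨hvP, hvS⟩ := hv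
    obtain ⟨w, hw, hwu⟩ := hP.1 hvP
    have hwS : w ∉ ({a, b, c, d} : Set V) := by
      intro hwmem
      simp only [Set.mem_insert_iff, Set.mem_singleton_iff] at hwmem hvS
      push_neg at hvS
      rcases hwmem with rfl | rfl | rfl | rfl
      · exact hvS.2.1 ((hP.1 (hP.2 w)).unique hw.symm hPadj_ab)
      · exact hvS.1 ((hP.1 (hP.2 w)).unique hw.symm hPadj_ab.symm)
      · exact hvS.2.2.2 ((hP.1 (hP.2 w)).unique hw.symm hPadj_cd)
      · exact hvS.2.2.1 ((hP.1 (hP.2 w)).unique hw.symm hPadj_cd.symm)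
    refine ⟨w, ?_, ?_⟩
    · simp only [Subgraph.deleteVerts_adj]
      exact ⟨hvP, hvS, hP.2 w, hwS, hw⟩
    · intro y hy
      exact hwu y ((Subgraph.deleteVerts_adj.mp hy).2.2.2.2)
  · rw [Subgraph.deleteVerts_verts, hP.2.verts_eq_univ]
    ext x; simp

open scoped Classical in
private theorem odd_sq {G : SimpleGraph V} (o : GraphOrientation G)
    (hpf : IsPfaffian G o) (hext : KExtendable G 2) {a b c d : V}
    (hab : G.Adj a b) (hbc : G.Adj b c) (hcd : G.Adj c d) (hda : G.Adj d a)
    (hac : a ≠ c) (hbd : b ≠ d) :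
    Odd ((if o.dir a b then 1 else 0) + (if o.dir b c then 1 else 0) +
      (if o.dir c d then 1 else 0) + (if o.dir d a then 1 else 0)) := by
  have h1 := hab.ne; have h2 := hbc.ne; have h3 := hcd.ne; have h4 := hda.ne
  set w : G.Walk a a :=
    Walk.cons hab (Walk.cons hbc (Walk.cons hcd (Walk.cons hda Walk.nil))) with hw
  have hcyc : w.IsCycle := sq_cycle_aux hab hbc hcd hda hac hbd
  have heven : Even w.length := by simp only [hw]; exact ⟨2, rfl⟩
  have hpm : HasPMOn G {x | x ∉ w.support} := by
    have := central_sq hext hab hcd hac h4.symm h2 hbd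
    convert this using 1
    ext x
    simp [hw, Walk.support]
    tauto
  have hodd := hpf a w hcyc heven hpm
  have hfc : forwardCount o w =
      (if o.dir a b then 1 else 0) + (if o.dir b c then 1 else 0) +
      (if o.dir c d then 1 else 0) + (if o.dir d a then 1 else 0) := by
    simp [forwardCount, hw, List.countP_cons]
    split_ifs <;> simp_all
  rwa [hfc] at hodd

/-- A brace with a Pfaffian orientation has no subgraph isomorphic to `K₂,₃`. -/
theorem no_K23_subgraph [Fintype V] (G : SimpleGraph V) (hbrace : IsBrace G)
    (hpf : ∃ o : GraphOrientation G, IsPfaffian G o) :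
    ¬ ∃ f : (Fin 2 ⊕ Fin 3) → V, Function.Injective f ∧
        ∀ a b, (completeBipartiteGraph (Fin 2) (Fin 3)).Adj a b →
          G.Adj (f a) (f b) := by
  classical
  obtain ⟨o, hpf⟩ := hpf
  obtain ⟨-, hext⟩ := hbrace
  rintro ⟨f, hinj, hadj⟩
  set x1 := f (Sum.inl 0) with hx1
  set x2 := f (Sum.inl 1) with hx2
  set y1 := f (Sum.inr 0) with hy1
  set y2 := f (Sum.inr 1) with hy2
  set y3 := f (Sum.inr 2) with hy3
  have A : ∀ (i : Fin 2) (j : Fin 3), G.Adj (f (Sum.inl i)) (f (Sum.inr j)) := by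
    intro i j; exact hadj _ _ (by simp)
  have a11 : G.Adj x1 y1 := A 0 0
  have a12 : G.Adj x1 y2 := A 0 1
  have a13 : G.Adj x1 y3 := A 0 2
  have a21 : G.Adj x2 y1 := A 1 0
  have a22 : G.Adj x2 y2 := A 1 1
  have a23 : G.Adj x2 y3 := A 1 2
  have hx12 : x1 ≠ x2 := fun h => by simpa using hinj h
  have hy12 : y1 ≠ y2 := fun h => by simpa using hinj h
  have hy13 : y1 ≠ y3 := fun h => by simpa using hinj h
  have hy23 : y2 ≠ y3 := fun h => by simpa using hinj h
  have O1 := odd_sq o hpf hext a11 a21.symm a22 a12.symm hx12 hy12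
  have O2 := odd_sq o hpf hext a12 a22.symm a23 a13.symm hx12 hy23
  have O3 := odd_sq o hpf hext a13 a23.symm a21 a11.symm hx12 (Ne.symm hy13)
  have E : ∀ u v : V, G.Adj u v →
      (if o.dir u v then 1 else 0) + (if o.dir v u then 1 else 0) = 1 := by
    intro u v huv
    rcases (o.adj_iff u v).mp huv with h | h
    · have := o.asymm u v h; simp [h, this]
    · have := o.asymm v u h; simp [h, this]
  have e1 := E _ _ a11; have e2 := E _ _ a12; have e3 := E _ _ a13
  have e4 := E _ _ a21; have e5 := E _ _ a22; have e6 := E _ _ a23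
  rw [Nat.odd_iff] at O1 O2 O3
  omega
end
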